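/- (Stochastic Bounded Real Lemma) Let γ > 0. Suppose the constrained backward matrix difference equation P(k) = L(P(k+1),k) − G(P(k+1),k)·H(P(k+1),k)⁻¹·G(P(k+1),k)ᵀ, Q(k) = L̃(P(k+1),Q(k+1),k) − G̃(P(k+1),Q(k+1),k)·H̃(P(k+1),Q(k+1),k)⁻¹·G̃(P(k+1),Q(k+1),k)ᵀ, with terminal conditions P(K+1) = Q(K+1) = 0 and the positivity constraints H(P(k+1),k) > 0 and H̃(P(k+1),Q(k+1),k) > 0 for all k ∈ {0,…,K}, has a (unique) solution (P₁(k), Q₁(k)). Then the perturbed operator satisfies ‖L_K‖ < γ and Q₁(k) ≤ 0 (negative semidefinite) for every k ∈ {0,…,K}. -/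

import Mathlib

open MeasureTheory ProbabilityTheory Matrix Finset

/-- The mean-field stochastic state recursion
`x(k+1) = A x + Ã E x + B ν + B̃ E ν + (C x + C̃ E x + D ν + D̃ E ν)·ω(k)`. -/
noncomputable def mfState {Ω : Type*} [MeasurableSpace Ω] (μ : Measure Ω) {n l : ℕ}
    (A At C Ct : ℕ → Matrix (Fin n) (Fin n) ℝ)
    (B Bt D Dt : ℕ → Matrix (Fin n) (Fin l) ℝ)
    (W : ℕ → Ω → ℝ) (x0 : Fin n → ℝ) (ν : ℕ → Ω → Fin l → ℝ) :
    ℕ → Ω → Fin n → ℝ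
  | 0 => fun _ => x0
  | (k+1) => fun a =>
      A k *ᵥ mfState μ A At C Ct B Bt D Dt W x0 ν k a
      + At k *ᵥ (∫ b, mfState μ A At C Ct B Bt D Dt W x0 ν k b ∂μ)
      + B k *ᵥ ν k a + Bt k *ᵥ (∫ b, ν k b ∂μ)
      + W k a • (C k *ᵥ mfState μ A At C Ct B Bt D Dt W x0 ν k a
          + Ct k *ᵥ (∫ b, mfState μ A At C Ct B Bt D Dt W x0 ν k b ∂μ)
          + D k *ᵥ ν k a + Dt k *ᵥ (∫ b, ν k b ∂μ))

/-- Admissibility of a disturbance: square integrability and independence of the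
noise `ω(k)` from the pair `(x(k), ν(k))`. -/
def mfAdmissible {Ω : Type*} [MeasurableSpace Ω] (μ : Measure Ω) {n l : ℕ} (K : ℕ)
    (W : ℕ → Ω → ℝ) (x : ℕ → Ω → Fin n → ℝ) (ν : ℕ → Ω → Fin l → ℝ) : Prop :=
  (∀ k ≤ K, MemLp (ν k) 2 μ) ∧
  (∀ k ≤ K, IndepFun (fun a => (x k a, ν k a)) (W k) μ)

/-- `L`-type Riccati operator: `AᵀQA + CᵀPC − ΦᵀΦ` (with `Q = P` this is `L(P)`,
with `A = 𝔸`, `C = ℂ` it is `L̃(P,Q)`). -/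
noncomputable def mfL {n m : ℕ} (A C : Matrix (Fin n) (Fin n) ℝ)
    (Φ : Matrix (Fin m) (Fin n) ℝ) (Q P : Matrix (Fin n) (Fin n) ℝ) :
    Matrix (Fin n) (Fin n) ℝ :=
  Aᵀ * Q * A + Cᵀ * P * C - Φᵀ * Φ

/-- `G`-type Riccati operator: `AᵀQB + CᵀPD`. -/
noncomputable def mfG {n l : ℕ} (A C : Matrix (Fin n) (Fin n) ℝ)
    (B D : Matrix (Fin n) (Fin l) ℝ) (Q P : Matrix (Fin n) (Fin n) ℝ) :
    Matrix (Fin n) (Fin l) ℝ :=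
  Aᵀ * Q * B + Cᵀ * P * D

/-- `H`-type operator: `γ²I + BᵀQB + DᵀPD`. -/
noncomputable def mfH {n l : ℕ} (γ : ℝ) (B D : Matrix (Fin n) (Fin l) ℝ)
    (Q P : Matrix (Fin n) (Fin n) ℝ) : Matrix (Fin l) (Fin l) ℝ :=
  γ^2 • (1 : Matrix (Fin l) (Fin l) ℝ) + Bᵀ * Q * B + Dᵀ * P * D

section Helpers


variable {Ω : Type*} [MeasurableSpace Ω] {μ : Measure Ω}

lemma L2mul {f g : Ω → ℝ} (hf : MemLp f 2 μ) (hg : MemLp g 2 μ) :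
    Integrable (fun a => f a * g a) μ := by
  refine Integrable.mono' ((hf.integrable_sq.add hg.integrable_sq).const_mul (1/2))
    (hf.1.mul hg.1) ?_
  filter_upwards with a
  have : ‖f a * g a‖ = |f a| * |g a| := by rw [Real.norm_eq_abs, abs_mul]
  rw [this]
  simp only [Pi.add_apply]
  nlinarith [sq_abs (f a), sq_abs (g a), sq_nonneg (|f a| - |g a|), abs_nonneg (f a), abs_nonneg (g a)]

noncomputable def mvCLM {p q : ℕ} (M : Matrix (Fin p) (Fin q) ℝ) :
    (Fin q → ℝ) →L[ℝ] (Fin p → ℝ) :=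
  LinearMap.toContinuousLinearMap M.mulVecLin

@[simp] lemma mvCLM_apply {p q : ℕ} (M : Matrix (Fin p) (Fin q) ℝ) (v : Fin q → ℝ) :
    mvCLM M v = M *ᵥ v := rfl

lemma ml2_mulVec {p q : ℕ} (M : Matrix (Fin p) (Fin q) ℝ) {f : Ω → Fin q → ℝ}
    (hf : MemLp f 2 μ) : MemLp (fun a => M *ᵥ f a) 2 μ := by
  exact (mvCLM M).comp_memLp' hf

lemma ml2_apply {q : ℕ} {f : Ω → Fin q → ℝ} (hf : MemLp f 2 μ) (i : Fin q) :
    MemLp (fun a => f a i) 2 μ := by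
  exact (ContinuousLinearMap.proj (R := ℝ) (φ := fun _ : Fin q => ℝ) i).comp_memLp' hf

lemma ml2_single {q : ℕ} (i : Fin q) {h : Ω → ℝ} (hh : MemLp h 2 μ) :
    MemLp (fun a => (Pi.single i (h a) : Fin q → ℝ)) 2 μ := by
  exact
    (LinearMap.toContinuousLinearMap (LinearMap.single ℝ (fun _ : Fin q => ℝ) i)).comp_memLp' hh

lemma ml2_of_apply {q : ℕ} {f : Ω → Fin q → ℝ} (h : ∀ i, MemLp (fun a => f a i) 2 μ) :
    MemLp f 2 μ := by
  have hf : f = fun a => ∑ i, Pi.single i (f a i) := by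
    funext a; rw [Finset.univ_sum_single]
  rw [hf]
  exact memLp_finset_sum (f := fun i a => Pi.single i (f a i)) Finset.univ
    (fun i _ => ml2_single i (h i))

lemma integrable_apply' {q : ℕ} {f : Ω → Fin q → ℝ} (hf : Integrable f μ) (i : Fin q) :
    Integrable (fun a => f a i) μ :=
  (ContinuousLinearMap.proj (R := ℝ) (φ := fun _ : Fin q => ℝ) i).integrable_comp hf

lemma integral_apply' {q : ℕ} {f : Ω → Fin q → ℝ} (hf : Integrable f μ) (i : Fin q) :
    (∫ a, f a ∂μ) i = ∫ a, f a i ∂μ :=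
  ((ContinuousLinearMap.proj (R := ℝ) (φ := fun _ : Fin q => ℝ) i).integral_comp_comm hf).symm

lemma integral_mulVec {p q : ℕ} (M : Matrix (Fin p) (Fin q) ℝ) {f : Ω → Fin q → ℝ}
    (hf : Integrable f μ) : ∫ a, M *ᵥ f a ∂μ = M *ᵥ ∫ a, f a ∂μ := by
  simpa using (mvCLM M).integral_comp_comm hf

lemma integrable_dot {q : ℕ} {f g : Ω → Fin q → ℝ} (hf : MemLp f 2 μ) (hg : MemLp g 2 μ) :
    Integrable (fun a => f a ⬝ᵥ g a) μ := by
  simp only [dotProduct]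
  exact integrable_finset_sum _ (fun i _ => L2mul (ml2_apply hf i) (ml2_apply hg i))

lemma integral_dot_const {q : ℕ} {f : Ω → Fin q → ℝ} (hf : Integrable f μ) (d : Fin q → ℝ) :
    ∫ a, f a ⬝ᵥ d ∂μ = (∫ a, f a ∂μ) ⬝ᵥ d := by
  simp only [dotProduct]
  rw [integral_finset_sum _ (fun i _ => (integrable_apply' hf i).mul_const (d i))]
  refine Finset.sum_congr rfl (fun i _ => ?_)
  rw [integral_mul_const, integral_apply' hf i]

lemma integral_const_dot {q : ℕ} {f : Ω → Fin q → ℝ} (hf : Integrable f μ) (d : Fin q → ℝ) :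
    ∫ a, d ⬝ᵥ f a ∂μ = d ⬝ᵥ ∫ a, f a ∂μ := by
  simp_rw [dotProduct_comm d]
  exact integral_dot_const hf d

lemma indep_integral_mul_zero {g w : Ω → ℝ} (hI : IndepFun g w μ) (hg : Integrable g μ)
    (hw : Integrable w μ) (h0 : ∫ a, w a ∂μ = 0) : ∫ a, w a * g a ∂μ = 0 := by
  have h := hI.symm.integral_mul_eq_mul_integral hw.aestronglyMeasurable hg.aestronglyMeasurable
  have he : (fun a => w a * g a) = w * g := rfl
  rw [show ∫ a, w a * g a ∂μ = integral μ (w * g) from by rw [he], h, h0, zero_mul]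

lemma indep_integral_sq_mul {g w : Ω → ℝ} (hI : IndepFun g w μ) (hg : Integrable g μ)
    (hw : MemLp w 2 μ) (h1 : ∫ a, w a * w a ∂μ = 1) :
    ∫ a, (w a * w a) * g a ∂μ = ∫ a, g a ∂μ := by
  have hI2 : IndepFun (fun a => w a * w a) g μ :=
    (hI.comp measurable_id (measurable_id.mul measurable_id)).symm
  have hww : Integrable (fun a => w a * w a) μ := L2mul hw hw
  have h := hI2.integral_mul_eq_mul_integral hww.aestronglyMeasurable hg.aestronglyMeasurable
  have he : (fun a => (w a * w a) * g a) = (fun a => w a * w a) * g := rfl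
  rw [show ∫ a, (w a * w a) * g a ∂μ = integral μ ((fun a => w a * w a) * g) from by rw [he], h, h1,
    one_mul]

lemma ml2_mul_indep {w g : Ω → ℝ} (hw : MemLp w 2 μ) (hg : MemLp g 2 μ)
    (hI : IndepFun g w μ) : MemLp (fun a => w a * g a) 2 μ := by
  have hm : AEStronglyMeasurable (fun a => w a * g a) μ := hw.1.mul hg.1
  rw [memLp_two_iff_integrable_sq hm]
  have hI2 : IndepFun (fun a => g a ^ 2) (fun a => w a ^ 2) μ :=
    hI.comp (measurable_id.pow_const 2) (measurable_id.pow_const 2)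
  have h := hI2.integrable_mul hg.integrable_sq hw.integrable_sq
  refine h.congr (Filter.Eventually.of_forall (fun a => ?_))
  simp [Pi.mul_apply]; ring

lemma ml2_smul_indep {q : ℕ} {w : Ω → ℝ} {g : Ω → Fin q → ℝ} (hw : MemLp w 2 μ)
    (hg : MemLp g 2 μ) (hI : IndepFun g w μ) : MemLp (fun a => w a • g a) 2 μ := by
  refine ml2_of_apply (fun i => ?_)
  exact ml2_mul_indep hw (ml2_apply hg i) (hI.comp (measurable_pi_apply i) measurable_id)

lemma ml2_add {q : ℕ} {f g : Ω → Fin q → ℝ} (hf : MemLp f 2 μ) (hg : MemLp g 2 μ) :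
    MemLp (fun a => f a + g a) 2 μ := hf.add hg

lemma ml2_sub {q : ℕ} {f g : Ω → Fin q → ℝ} (hf : MemLp f 2 μ) (hg : MemLp g 2 μ) :
    MemLp (fun a => f a - g a) 2 μ := hf.sub hg

lemma integrable_mul_indep {g w : Ω → ℝ} (hI : IndepFun g w μ) (hg : Integrable g μ)
    (hw : Integrable w μ) : Integrable (fun a => w a * g a) μ := by
  have h := hI.symm.integrable_mul hw hg
  exact h

set_option linter.unusedSectionVars false

variable [IsProbabilityMeasure μ]

lemma ml2_int {q : ℕ} {f : Ω → Fin q → ℝ} (hf : MemLp f 2 μ) : Integrable f μ :=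
  hf.integrable one_le_two

lemma ml2_int_s {f : Ω → ℝ} (hf : MemLp f 2 μ) : Integrable f μ :=
  hf.integrable one_le_two

lemma integrable_dot_const {q : ℕ} {f : Ω → Fin q → ℝ} (hf : Integrable f μ) (d : Fin q → ℝ) :
    Integrable (fun a => f a ⬝ᵥ d) μ := by
  simp only [dotProduct]
  exact integrable_finset_sum _ (fun i _ => (integrable_apply' hf i).mul_const (d i))

lemma integrable_const_dot {q : ℕ} {f : Ω → Fin q → ℝ} (hf : Integrable f μ) (d : Fin q → ℝ) :
    Integrable (fun a => d ⬝ᵥ f a) μ := by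
  simp only [dotProduct]
  exact integrable_finset_sum _ (fun i _ => (integrable_apply' hf i).const_mul (d i))

lemma integral_smul_indep_zero {q : ℕ} {w : Ω → ℝ} {g : Ω → Fin q → ℝ} (hw : MemLp w 2 μ)
    (hg : MemLp g 2 μ) (hI : IndepFun g w μ) (h0 : ∫ a, w a ∂μ = 0) :
    ∫ a, w a • g a ∂μ = 0 := by
  have hint : Integrable (fun a => w a • g a) μ := ml2_int (ml2_smul_indep hw hg hI)
  have hcomp : ∀ i, (∫ a, w a • g a ∂μ) i = 0 := by
    intro i
    rw [integral_apply' hint i]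
    have hIc : IndepFun (fun a => g a i) w μ := hI.comp (measurable_pi_apply i) measurable_id
    simp only [Pi.smul_apply, smul_eq_mul]
    exact indep_integral_mul_zero hIc (ml2_int_s (ml2_apply hg i)) (ml2_int_s hw) h0
  funext i
  exact hcomp i

lemma integral_quad_split {q : ℕ} {f : Ω → Fin q → ℝ} (hf : MemLp f 2 μ)
    (hf0 : ∫ a, f a ∂μ = 0) (R : Matrix (Fin q) (Fin q) ℝ) (c : Fin q → ℝ) :
    ∫ a, (f a + c) ⬝ᵥ (R *ᵥ (f a + c)) ∂μ
      = (∫ a, f a ⬝ᵥ (R *ᵥ f a) ∂μ) + c ⬝ᵥ (R *ᵥ c) := by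
  have hexp : ∀ a, (f a + c) ⬝ᵥ (R *ᵥ (f a + c))
      = f a ⬝ᵥ (R *ᵥ f a) + (f a ⬝ᵥ (R *ᵥ c) + (c ⬝ᵥ (R *ᵥ f a) + c ⬝ᵥ (R *ᵥ c))) := by
    intro a
    rw [Matrix.mulVec_add, add_dotProduct, dotProduct_add, dotProduct_add]
    ring
  simp only [hexp]
  have ia : Integrable (fun a => f a ⬝ᵥ (R *ᵥ f a)) μ := integrable_dot hf (ml2_mulVec R hf)
  have ib : Integrable (fun a => f a ⬝ᵥ (R *ᵥ c)) μ := integrable_dot_const (ml2_int hf) _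
  have ic : Integrable (fun a => c ⬝ᵥ (R *ᵥ f a)) μ :=
    integrable_const_dot (ml2_int (ml2_mulVec R hf)) _
  have id4 : Integrable (fun _ : Ω => c ⬝ᵥ (R *ᵥ c)) μ := integrable_const _
  rw [integral_add (f := fun a => f a ⬝ᵥ (R *ᵥ f a))
      (g := fun a => f a ⬝ᵥ (R *ᵥ c) + (c ⬝ᵥ (R *ᵥ f a) + c ⬝ᵥ (R *ᵥ c))) ia
      (ib.add (ic.add id4)),
    integral_add (f := fun a => f a ⬝ᵥ (R *ᵥ c))
      (g := fun a => c ⬝ᵥ (R *ᵥ f a) + c ⬝ᵥ (R *ᵥ c)) ib (ic.add id4),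
    integral_add (f := fun a => c ⬝ᵥ (R *ᵥ f a)) (g := fun _ => c ⬝ᵥ (R *ᵥ c)) ic id4]
  rw [integral_dot_const (ml2_int hf) (R *ᵥ c), hf0, zero_dotProduct]
  rw [integral_const_dot (ml2_int (ml2_mulVec R hf)) c, integral_mulVec R (ml2_int hf), hf0,
    Matrix.mulVec_zero, dotProduct_zero]
  simp

end Helpers


lemma dot_tr {p q : ℕ} (M : Matrix (Fin p) (Fin q) ℝ) (u : Fin p → ℝ) (v : Fin q → ℝ) :
    u ⬝ᵥ (M *ᵥ v) = (Mᵀ *ᵥ u) ⬝ᵥ v := by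
  rw [Matrix.dotProduct_mulVec, Matrix.mulVec_transpose]

lemma dot_mul_mulVec {p q r : ℕ} (M : Matrix (Fin q) (Fin p) ℝ) (N : Matrix (Fin q) (Fin r) ℝ)
    (u : Fin p → ℝ) (v : Fin r → ℝ) :
    (M *ᵥ u) ⬝ᵥ (N *ᵥ v) = u ⬝ᵥ ((Mᵀ * N) *ᵥ v) := by
  rw [← Matrix.mulVec_mulVec, dot_tr (Mᵀ), Matrix.transpose_transpose]

lemma dot_swap {p q : ℕ} (M : Matrix (Fin p) (Fin q) ℝ) (u : Fin p → ℝ) (v : Fin q → ℝ) :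
    u ⬝ᵥ (M *ᵥ v) = v ⬝ᵥ (Mᵀ *ᵥ u) := by
  rw [dot_tr, dotProduct_comm]

lemma expand_quad {p n l : ℕ} (Am : Matrix (Fin p) (Fin n) ℝ) (Bm : Matrix (Fin p) (Fin l) ℝ)
    (R : Matrix (Fin p) (Fin p) ℝ) (hR : Rᵀ = R) (y : Fin n → ℝ) (w : Fin l → ℝ) :
    (Am *ᵥ y + Bm *ᵥ w) ⬝ᵥ (R *ᵥ (Am *ᵥ y + Bm *ᵥ w)) =
      y ⬝ᵥ ((Amᵀ * R * Am) *ᵥ y) + 2 * (y ⬝ᵥ ((Amᵀ * R * Bm) *ᵥ w))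
        + w ⬝ᵥ ((Bmᵀ * R * Bm) *ᵥ w) := by
  have h1 : ∀ (u : Fin p → ℝ), u ⬝ᵥ (R *ᵥ (Am *ᵥ y + Bm *ᵥ w))
      = u ⬝ᵥ ((R * Am) *ᵥ y) + u ⬝ᵥ ((R * Bm) *ᵥ w) := by
    intro u
    rw [Matrix.mulVec_add, dotProduct_add, Matrix.mulVec_mulVec, Matrix.mulVec_mulVec]
  rw [add_dotProduct, h1, h1]
  have e1 : (Am *ᵥ y) ⬝ᵥ ((R * Am) *ᵥ y) = y ⬝ᵥ ((Amᵀ * R * Am) *ᵥ y) := by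
    rw [dot_mul_mulVec, ← Matrix.mul_assoc]
  have e2 : (Am *ᵥ y) ⬝ᵥ ((R * Bm) *ᵥ w) = y ⬝ᵥ ((Amᵀ * R * Bm) *ᵥ w) := by
    rw [dot_mul_mulVec, ← Matrix.mul_assoc]
  have e3 : (Bm *ᵥ w) ⬝ᵥ ((R * Bm) *ᵥ w) = w ⬝ᵥ ((Bmᵀ * R * Bm) *ᵥ w) := by
    rw [dot_mul_mulVec, ← Matrix.mul_assoc]
  have e4 : (Bm *ᵥ w) ⬝ᵥ ((R * Am) *ᵥ y) = y ⬝ᵥ ((Amᵀ * R * Bm) *ᵥ w) := by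
    rw [dot_mul_mulVec, ← Matrix.mul_assoc, dot_swap]
    congr 2
    rw [Matrix.transpose_mul, Matrix.transpose_mul, Matrix.transpose_transpose, hR,
      Matrix.mul_assoc, ← Matrix.mul_assoc]
  rw [e1, e2, e3, e4]; ring

lemma expand_compsq {n l : ℕ} (H : Matrix (Fin l) (Fin l) ℝ) (G : Matrix (Fin n) (Fin l) ℝ)
    (hHt : Hᵀ = H) (hu : IsUnit H.det) (y : Fin n → ℝ) (w : Fin l → ℝ) :
    (w + H⁻¹ *ᵥ (Gᵀ *ᵥ y)) ⬝ᵥ (H *ᵥ (w + H⁻¹ *ᵥ (Gᵀ *ᵥ y))) =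
      w ⬝ᵥ (H *ᵥ w) + 2 * (y ⬝ᵥ ((G * H⁻¹ * Gᵀ) *ᵥ y))
        + 2 * (y ⬝ᵥ (G *ᵥ w)) - (y ⬝ᵥ ((G * H⁻¹ * Gᵀ) *ᵥ y)) := by
  have hs : H⁻¹ *ᵥ (Gᵀ *ᵥ y) = (H⁻¹ * Gᵀ) *ᵥ y := by rw [Matrix.mulVec_mulVec]
  have hleft : H⁻¹ * H = 1 := Matrix.nonsing_inv_mul H hu
  have hright : H * H⁻¹ = 1 := Matrix.mul_nonsing_inv H hu
  have hinvt : (H⁻¹)ᵀ = H⁻¹ := by rw [Matrix.transpose_nonsing_inv, hHt]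
  have := expand_quad (H⁻¹ * Gᵀ) (1 : Matrix (Fin l) (Fin l) ℝ) H hHt y w
  rw [Matrix.one_mulVec] at this
  rw [show w + H⁻¹ *ᵥ (Gᵀ *ᵥ y) = (H⁻¹ * Gᵀ) *ᵥ y + w from by rw [hs, add_comm], this]
  have ht : (H⁻¹ * Gᵀ)ᵀ = G * H⁻¹ := by
    rw [Matrix.transpose_mul, Matrix.transpose_transpose, hinvt]
  have m1 : (H⁻¹ * Gᵀ)ᵀ * H * (H⁻¹ * Gᵀ) = G * H⁻¹ * Gᵀ := by
    rw [ht, Matrix.mul_assoc (G * H⁻¹) H (H⁻¹ * Gᵀ), ← Matrix.mul_assoc H H⁻¹ Gᵀ, hright,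
      Matrix.one_mul]
  have m2 : (H⁻¹ * Gᵀ)ᵀ * H * (1 : Matrix (Fin l) (Fin l) ℝ) = G := by
    rw [ht, Matrix.mul_one, Matrix.mul_assoc, hleft, Matrix.mul_one]
  have m3 : (1 : Matrix (Fin l) (Fin l) ℝ)ᵀ * H * (1 : Matrix (Fin l) (Fin l) ℝ) = H := by
    rw [Matrix.transpose_one, Matrix.one_mul, Matrix.mul_one]
  rw [m1, m2, m3]; ring

lemma mfH_transpose {n l : ℕ} (γ' : ℝ) (Bb Db : Matrix (Fin n) (Fin l) ℝ)
    {Q' P' : Matrix (Fin n) (Fin n) ℝ} (hQ : Q'ᵀ = Q') (hP : P'ᵀ = P') :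
    (mfH γ' Bb Db Q' P')ᵀ = mfH γ' Bb Db Q' P' := by
  simp [mfH, Matrix.transpose_add, Matrix.transpose_mul, Matrix.transpose_transpose,
    Matrix.transpose_smul, Matrix.transpose_one, hQ, hP, Matrix.mul_assoc]

lemma ric_transpose {n l m : ℕ} (γ' : ℝ) (Ab Cb : Matrix (Fin n) (Fin n) ℝ)
    (Bb Db : Matrix (Fin n) (Fin l) ℝ) (Φm : Matrix (Fin m) (Fin n) ℝ)
    {Q' P' : Matrix (Fin n) (Fin n) ℝ} (hQ : Q'ᵀ = Q') (hP : P'ᵀ = P') :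
    (mfL Ab Cb Φm Q' P' - mfG Ab Cb Bb Db Q' P' * (mfH γ' Bb Db Q' P')⁻¹
        * (mfG Ab Cb Bb Db Q' P')ᵀ)ᵀ
      = mfL Ab Cb Φm Q' P' - mfG Ab Cb Bb Db Q' P' * (mfH γ' Bb Db Q' P')⁻¹
        * (mfG Ab Cb Bb Db Q' P')ᵀ := by
  have hinvt : ((mfH γ' Bb Db Q' P')⁻¹)ᵀ = (mfH γ' Bb Db Q' P')⁻¹ := by
    rw [Matrix.transpose_nonsing_inv, mfH_transpose γ' Bb Db hQ hP]
  simp [mfL, mfG, Matrix.transpose_sub, Matrix.transpose_add, Matrix.transpose_mul,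
    Matrix.transpose_transpose, hQ, hP, hinvt, Matrix.mul_assoc]

lemma key_identity {n l m : ℕ} (γ' : ℝ) (Ab Cb : Matrix (Fin n) (Fin n) ℝ)
    (Bb Db : Matrix (Fin n) (Fin l) ℝ) (Φm : Matrix (Fin m) (Fin n) ℝ)
    {Q' P' P₀ : Matrix (Fin n) (Fin n) ℝ} (hQ : Q'ᵀ = Q') (hP : P'ᵀ = P')
    (hH : (mfH γ' Bb Db Q' P').PosDef)
    (hP₀ : P₀ = mfL Ab Cb Φm Q' P' - mfG Ab Cb Bb Db Q' P' * (mfH γ' Bb Db Q' P')⁻¹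
        * (mfG Ab Cb Bb Db Q' P')ᵀ)
    (y : Fin n → ℝ) (w : Fin l → ℝ) :
    γ'^2 * (w ⬝ᵥ w) - (Φm *ᵥ y) ⬝ᵥ (Φm *ᵥ y) - y ⬝ᵥ (P₀ *ᵥ y)
      + (Ab *ᵥ y + Bb *ᵥ w) ⬝ᵥ (Q' *ᵥ (Ab *ᵥ y + Bb *ᵥ w))
      + (Cb *ᵥ y + Db *ᵥ w) ⬝ᵥ (P' *ᵥ (Cb *ᵥ y + Db *ᵥ w))
      = (w + (mfH γ' Bb Db Q' P')⁻¹ *ᵥ ((mfG Ab Cb Bb Db Q' P')ᵀ *ᵥ y)) ⬝ᵥ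
          ((mfH γ' Bb Db Q' P') *ᵥ (w + (mfH γ' Bb Db Q' P')⁻¹ *ᵥ
            ((mfG Ab Cb Bb Db Q' P')ᵀ *ᵥ y))) := by
  have hu : IsUnit (mfH γ' Bb Db Q' P').det := hH.det_pos.ne'.isUnit
  rw [expand_quad Ab Bb Q' hQ y w, expand_quad Cb Db P' hP y w,
    expand_compsq (mfH γ' Bb Db Q' P') (mfG Ab Cb Bb Db Q' P')
      (mfH_transpose γ' Bb Db hQ hP) hu y w]
  have hHw : w ⬝ᵥ ((mfH γ' Bb Db Q' P') *ᵥ w)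
      = γ'^2 * (w ⬝ᵥ w) + w ⬝ᵥ ((Bbᵀ * Q' * Bb) *ᵥ w) + w ⬝ᵥ ((Dbᵀ * P' * Db) *ᵥ w) := by
    rw [mfH, Matrix.add_mulVec, Matrix.add_mulVec, dotProduct_add, dotProduct_add,
      Matrix.smul_mulVec, Matrix.one_mulVec, dotProduct_smul, smul_eq_mul]
  have hGw : y ⬝ᵥ ((mfG Ab Cb Bb Db Q' P') *ᵥ w)
      = y ⬝ᵥ ((Abᵀ * Q' * Bb) *ᵥ w) + y ⬝ᵥ ((Cbᵀ * P' * Db) *ᵥ w) := by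
    rw [mfG, Matrix.add_mulVec, dotProduct_add]
  have hPhi : (Φm *ᵥ y) ⬝ᵥ (Φm *ᵥ y) = y ⬝ᵥ ((Φmᵀ * Φm) *ᵥ y) := dot_mul_mulVec Φm Φm y y
  have hP₀y : y ⬝ᵥ (P₀ *ᵥ y)
      = y ⬝ᵥ ((Abᵀ * Q' * Ab) *ᵥ y) + y ⬝ᵥ ((Cbᵀ * P' * Cb) *ᵥ y)
        - y ⬝ᵥ ((Φmᵀ * Φm) *ᵥ y)
        - y ⬝ᵥ ((mfG Ab Cb Bb Db Q' P' * (mfH γ' Bb Db Q' P')⁻¹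
            * (mfG Ab Cb Bb Db Q' P')ᵀ) *ᵥ y) := by
    rw [hP₀, mfL, Matrix.sub_mulVec, Matrix.sub_mulVec, Matrix.add_mulVec,
      dotProduct_sub, dotProduct_sub, dotProduct_add]
  rw [hHw, hGw, hPhi, hP₀y]
  ring


lemma dot_self_nonneg {q : ℕ} (v : Fin q → ℝ) : 0 ≤ v ⬝ᵥ v :=
  Finset.sum_nonneg (fun i _ => mul_self_nonneg (v i))

lemma dot_self_pos {q : ℕ} {v : Fin q → ℝ} (hv : v ≠ 0) : 0 < v ⬝ᵥ v := by
  rcases lt_or_eq_of_le (dot_self_nonneg v) with h | h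
  · exact h
  · exact absurd (dotProduct_self_eq_zero.1 h.symm) hv

lemma posdef_apply {q : ℕ} {M : Matrix (Fin q) (Fin q) ℝ} (hM : M.PosDef) {x : Fin q → ℝ}
    (hx : x ≠ 0) : 0 < x ⬝ᵥ (M *ᵥ x) := by
  have := hM.dotProduct_mulVec_pos hx
  simpa using this

lemma psd_apply {q : ℕ} {M : Matrix (Fin q) (Fin q) ℝ} (hM : M.PosSemidef) (x : Fin q → ℝ) :
    0 ≤ x ⬝ᵥ (M *ᵥ x) := by
  have := hM.dotProduct_mulVec_nonneg x
  simpa using this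

lemma posdef_quant {q : ℕ} {M : Matrix (Fin q) (Fin q) ℝ} (hM : M.PosDef) :
    ∃ c > 0, ∀ x : Fin q → ℝ, c * (x ⬝ᵥ x) ≤ x ⬝ᵥ (M *ᵥ x) := by
  by_cases hq : ∀ x : Fin q → ℝ, x = 0
  · refine ⟨1, one_pos, fun x => ?_⟩
    rw [hq x]
    simp
  push_neg at hq
  obtain ⟨x₀, hx₀⟩ := hq
  set S : Set (Fin q → ℝ) := {x | x ⬝ᵥ x = 1} with hS
  have hcont : Continuous fun x : Fin q → ℝ => x ⬝ᵥ x :=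
    continuous_id.dotProduct continuous_id
  have hMcont : Continuous fun x : Fin q → ℝ => x ⬝ᵥ (M *ᵥ x) :=
    continuous_id.dotProduct (continuous_const.matrix_mulVec continuous_id)
  have hclosed : IsClosed S := isClosed_singleton.preimage hcont
  have hsub : S ⊆ Metric.closedBall 0 1 := by
    intro x hx
    rw [Metric.mem_closedBall, dist_zero_right]
    rw [pi_norm_le_iff_of_nonneg zero_le_one]
    intro i
    rw [Real.norm_eq_abs, abs_le]
    have h1 : x i * x i ≤ x ⬝ᵥ x :=
      Finset.single_le_sum (f := fun j => x j * x j) (fun j _ => mul_self_nonneg (x j))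
        (Finset.mem_univ i)
    rw [hx] at h1
    constructor <;> nlinarith
  have hcomp : IsCompact S :=
    (isCompact_closedBall (0 : Fin q → ℝ) 1).of_isClosed_subset hclosed hsub
  have hne : S.Nonempty := by
    refine ⟨(Real.sqrt (x₀ ⬝ᵥ x₀))⁻¹ • x₀, ?_⟩
    have hpos : 0 < x₀ ⬝ᵥ x₀ := dot_self_pos hx₀
    have hsq : Real.sqrt (x₀ ⬝ᵥ x₀) * Real.sqrt (x₀ ⬝ᵥ x₀) = x₀ ⬝ᵥ x₀ :=
      Real.mul_self_sqrt hpos.le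
    have hs : 0 < Real.sqrt (x₀ ⬝ᵥ x₀) := Real.sqrt_pos.2 hpos
    show ((Real.sqrt (x₀ ⬝ᵥ x₀))⁻¹ • x₀) ⬝ᵥ ((Real.sqrt (x₀ ⬝ᵥ x₀))⁻¹ • x₀) = 1
    rw [smul_dotProduct, dotProduct_smul, smul_eq_mul, smul_eq_mul, ← hsq]
    field_simp
    rw [Real.sqrt_sq hs.le]
  obtain ⟨u, huS, hminOn⟩ := hcomp.exists_isMinOn hne hMcont.continuousOn
  have hmin : ∀ z ∈ S, u ⬝ᵥ (M *ᵥ u) ≤ z ⬝ᵥ (M *ᵥ z) := fun z hz => isMinOn_iff.1 hminOn z hz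
  have hune : u ≠ 0 := by
    intro h
    have : u ⬝ᵥ u = 1 := huS
    rw [h] at this; simp at this
  refine ⟨u ⬝ᵥ (M *ᵥ u), posdef_apply hM hune, fun x => ?_⟩
  by_cases hx : x = 0
  · rw [hx]; simp
  have hpos : 0 < x ⬝ᵥ x := dot_self_pos hx
  set t := Real.sqrt (x ⬝ᵥ x) with ht
  have hts : t * t = x ⬝ᵥ x := Real.mul_self_sqrt hpos.le
  have htpos : 0 < t := Real.sqrt_pos.2 hpos
  have hu' : (t⁻¹ • x) ∈ S := by
    show (t⁻¹ • x) ⬝ᵥ (t⁻¹ • x) = 1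
    rw [smul_dotProduct, dotProduct_smul, smul_eq_mul, smul_eq_mul, ← hts]
    field_simp
  have h2 := hmin _ hu'
  have h3 : (t⁻¹ • x) ⬝ᵥ (M *ᵥ (t⁻¹ • x)) = t⁻¹ * t⁻¹ * (x ⬝ᵥ (M *ᵥ x)) := by
    rw [smul_dotProduct, Matrix.mulVec_smul, dotProduct_smul, smul_eq_mul, smul_eq_mul]
    ring
  rw [h3] at h2
  have h4 : (u ⬝ᵥ (M *ᵥ u)) * (x ⬝ᵥ x) ≤ (t⁻¹ * t⁻¹ * (x ⬝ᵥ (M *ᵥ x))) * (x ⬝ᵥ x) :=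
    mul_le_mul_of_nonneg_right h2 hpos.le
  calc (u ⬝ᵥ (M *ᵥ u)) * (x ⬝ᵥ x) ≤ (t⁻¹ * t⁻¹ * (x ⬝ᵥ (M *ᵥ x))) * (x ⬝ᵥ x) := h4
    _ = x ⬝ᵥ (M *ᵥ x) := by
        rw [← hts]
        field_simp

lemma dot_err_bound {q : ℕ} (E : Matrix (Fin q) (Fin q) ℝ) (x : Fin q → ℝ) :
    |x ⬝ᵥ (E *ᵥ x)| ≤ (∑ i, ∑ j, |E i j|) * (x ⬝ᵥ x) := by
  have hexp : x ⬝ᵥ (E *ᵥ x) = ∑ i, ∑ j, x i * E i j * x j := by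
    simp only [dotProduct, Matrix.mulVec, dotProduct]
    refine Finset.sum_congr rfl (fun i _ => ?_)
    rw [Finset.mul_sum]
    refine Finset.sum_congr rfl (fun j _ => ?_)
    ring
  rw [hexp, Finset.sum_mul]
  refine (Finset.abs_sum_le_sum_abs _ _).trans (Finset.sum_le_sum (fun i _ => ?_))
  rw [Finset.sum_mul]
  refine (Finset.abs_sum_le_sum_abs _ _).trans (Finset.sum_le_sum (fun j _ => ?_))
  have h1 : |x i * E i j * x j| = |E i j| * |x i * x j| := by
    rw [abs_mul, abs_mul, abs_mul]
    ring
  rw [h1]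
  refine mul_le_mul_of_nonneg_left ?_ (abs_nonneg _)
  have hii : x i * x i ≤ x ⬝ᵥ x :=
    Finset.single_le_sum (f := fun k => x k * x k) (fun k _ => mul_self_nonneg (x k))
      (Finset.mem_univ i)
  have hjj : x j * x j ≤ x ⬝ᵥ x :=
    Finset.single_le_sum (f := fun k => x k * x k) (fun k _ => mul_self_nonneg (x k))
      (Finset.mem_univ j)
  rw [abs_mul]
  nlinarith [abs_nonneg (x i), abs_nonneg (x j), sq_abs (x i), sq_abs (x j),
    sq_nonneg (|x i| - |x j|)]

lemma real_isHermitian_iff {q : ℕ} (M : Matrix (Fin q) (Fin q) ℝ) :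
    M.IsHermitian ↔ Mᵀ = M := by
  rw [Matrix.IsHermitian, Matrix.conjTranspose_eq_transpose_of_trivial]

lemma posdef_eventually {q : ℕ} {F : ℝ → Matrix (Fin q) (Fin q) ℝ} {t₀ : ℝ}
    (hcont : ContinuousAt F t₀) (hherm : ∀ t, (F t)ᵀ = F t) (hpos : (F t₀).PosDef) :
    ∀ᶠ t in nhds t₀, (F t).PosDef := by
  obtain ⟨c, hc, hquant⟩ := posdef_quant hpos
  have hφ : Continuous fun M : Matrix (Fin q) (Fin q) ℝ => ∑ i, ∑ j, |M i j - F t₀ i j| := by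
    refine continuous_finset_sum _ (fun i _ => continuous_finset_sum _ (fun j _ => ?_))
    have : Continuous fun M : Matrix (Fin q) (Fin q) ℝ => M i j :=
      (continuous_apply j).comp (continuous_apply i)
    exact (this.sub continuous_const).abs
  have htend : Filter.Tendsto (fun t => ∑ i, ∑ j, |F t i j - F t₀ i j|) (nhds t₀) (nhds 0) := by
    have := (hφ.continuousAt).comp hcont
    have h0 : (∑ i, ∑ j, |F t₀ i j - F t₀ i j|) = 0 := by simp
    simpa [ContinuousAt, h0, Function.comp_def] using this
  filter_upwards [htend.eventually_lt_const hc] with t hlt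
  refine posDef_iff_dotProduct_mulVec.2 ⟨?_, ?_⟩
  · rw [real_isHermitian_iff]; exact hherm t
  · intro x hx
    have hxx : 0 < x ⬝ᵥ x := dot_self_pos hx
    have hsplit : x ⬝ᵥ (F t *ᵥ x) = x ⬝ᵥ (F t₀ *ᵥ x) + x ⬝ᵥ ((F t - F t₀) *ᵥ x) := by
      rw [Matrix.sub_mulVec, dotProduct_sub]
      ring
    have herr := dot_err_bound (F t - F t₀) x
    have herr2 : |x ⬝ᵥ ((F t - F t₀) *ᵥ x)| ≤ (∑ i, ∑ j, |F t i j - F t₀ i j|) * (x ⬝ᵥ x) := by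
      refine herr.trans (le_of_eq ?_)
      congr 1
    have h5 := hquant x
    have : 0 < x ⬝ᵥ (F t *ᵥ x) := by
      rw [hsplit]
      have := abs_le.1 herr2
      nlinarith
    simpa using this


lemma psd_tmul {p q : ℕ} {S : Matrix (Fin p) (Fin p) ℝ} (hS : S.PosSemidef)
    (Bm : Matrix (Fin p) (Fin q) ℝ) : (Bmᵀ * S * Bm).PosSemidef := by
  have := hS.conjTranspose_mul_mul_same Bm
  rwa [Matrix.conjTranspose_eq_transpose_of_trivial] at this

lemma psd_mul_t {p q : ℕ} {S : Matrix (Fin p) (Fin p) ℝ} (hS : S.PosSemidef)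
    (Bm : Matrix (Fin q) (Fin p) ℝ) : (Bm * S * Bmᵀ).PosSemidef := by
  have := hS.mul_mul_conjTranspose_same Bm
  rwa [Matrix.conjTranspose_eq_transpose_of_trivial] at this

lemma psd_phi {p q : ℕ} (Φm : Matrix (Fin p) (Fin q) ℝ) : (Φmᵀ * Φm).PosSemidef := by
  have := Matrix.posSemidef_conjTranspose_mul_self Φm
  rwa [Matrix.conjTranspose_eq_transpose_of_trivial] at this

lemma negq_step {n l m : ℕ} (γ' : ℝ) (Ab Cb : Matrix (Fin n) (Fin n) ℝ)
    (Bb Db : Matrix (Fin n) (Fin l) ℝ) (Φm : Matrix (Fin m) (Fin n) ℝ)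
    {Q' P' : Matrix (Fin n) (Fin n) ℝ} (hQ : (-Q').PosSemidef) (hP : (-P').PosSemidef)
    (hH : (mfH γ' Bb Db Q' P').PosDef) :
    (-(mfL Ab Cb Φm Q' P' - mfG Ab Cb Bb Db Q' P' * (mfH γ' Bb Db Q' P')⁻¹
      * (mfG Ab Cb Bb Db Q' P')ᵀ)).PosSemidef := by
  have hrw : -(mfL Ab Cb Φm Q' P' - mfG Ab Cb Bb Db Q' P' * (mfH γ' Bb Db Q' P')⁻¹
      * (mfG Ab Cb Bb Db Q' P')ᵀ)
      = (Abᵀ * (-Q') * Ab + Cbᵀ * (-P') * Cb) + (Φmᵀ * Φm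
        + mfG Ab Cb Bb Db Q' P' * (mfH γ' Bb Db Q' P')⁻¹ * (mfG Ab Cb Bb Db Q' P')ᵀ) := by
    rw [mfL]
    noncomm_ring
  rw [hrw]
  exact (((psd_tmul hQ Ab).add (psd_tmul hP Cb)).add
    ((psd_phi Φm).add (psd_mul_t hH.inv.posSemidef _)))

section OneStep

set_option linter.unusedSectionVars false
set_option maxHeartbeats 1000000

variable {Ω : Type*} [MeasurableSpace Ω] {μ : Measure Ω} [IsProbabilityMeasure μ]

lemma indep_comp_pair {n l : ℕ} {X : Ω → Fin n → ℝ} {V : Ω → Fin l → ℝ} {w : Ω → ℝ}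
    (h : IndepFun (fun a => (X a, V a)) w μ) {β : Type*} [MeasurableSpace β]
    (φ : (Fin n → ℝ) × (Fin l → ℝ) → β) (hφ : Measurable φ) :
    IndepFun (fun a => φ (X a, V a)) w μ :=
  h.comp hφ measurable_id

lemma one_step {n l m : ℕ} (γ' : ℝ)
    (Am Atm Cm Ctm : Matrix (Fin n) (Fin n) ℝ)
    (Bm Btm Dm Dtm : Matrix (Fin n) (Fin l) ℝ)
    (Φm : Matrix (Fin m) (Fin n) ℝ)
    (P' Q' P₀ Q₀ : Matrix (Fin n) (Fin n) ℝ)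
    (hP' : P'ᵀ = P') (hQ' : Q'ᵀ = Q')
    (hHpos : (mfH γ' Bm Dm P' P').PosDef)
    (hHtpos : (mfH γ' (Bm + Btm) (Dm + Dtm) Q' P').PosDef)
    (hP₀ : P₀ = mfL Am Cm Φm P' P' - mfG Am Cm Bm Dm P' P' * (mfH γ' Bm Dm P' P')⁻¹
      * (mfG Am Cm Bm Dm P' P')ᵀ)
    (hQ₀ : Q₀ = mfL (Am + Atm) (Cm + Ctm) Φm Q' P'
      - mfG (Am + Atm) (Cm + Ctm) (Bm + Btm) (Dm + Dtm) Q' P'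
        * (mfH γ' (Bm + Btm) (Dm + Dtm) Q' P')⁻¹
        * (mfG (Am + Atm) (Cm + Ctm) (Bm + Btm) (Dm + Dtm) Q' P')ᵀ)
    (X XP : Ω → Fin n → ℝ) (V : Ω → Fin l → ℝ) (ω : Ω → ℝ)
    (hX2 : MemLp X 2 μ) (hV2 : MemLp V 2 μ) (hω2 : MemLp ω 2 μ)
    (hind : IndepFun (fun a => (X a, V a)) ω μ)
    (hωmean : ∫ a, ω a ∂μ = 0) (hωvar : ∫ a, ω a * ω a ∂μ = 1)
    (hXP : XP = fun a => Am *ᵥ X a + Atm *ᵥ (∫ b, X b ∂μ) + Bm *ᵥ V a + Btm *ᵥ (∫ b, V b ∂μ)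
      + ω a • (Cm *ᵥ X a + Ctm *ᵥ (∫ b, X b ∂μ) + Dm *ᵥ V a + Dtm *ᵥ (∫ b, V b ∂μ))) :
    0 ≤ γ' ^ 2 * (∫ a, V a ⬝ᵥ V a ∂μ) - (∫ a, (Φm *ᵥ X a) ⬝ᵥ (Φm *ᵥ X a) ∂μ)
      + ((∫ a, (XP a - ∫ b, XP b ∂μ) ⬝ᵥ (P' *ᵥ (XP a - ∫ b, XP b ∂μ)) ∂μ)
          + (∫ b, XP b ∂μ) ⬝ᵥ (Q' *ᵥ (∫ b, XP b ∂μ)))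
      - ((∫ a, (X a - ∫ b, X b ∂μ) ⬝ᵥ (P₀ *ᵥ (X a - ∫ b, X b ∂μ)) ∂μ)
          + (∫ b, X b ∂μ) ⬝ᵥ (Q₀ *ᵥ (∫ b, X b ∂μ))) := by
  set mX : Fin n → ℝ := ∫ b, X b ∂μ with hmX
  set mV : Fin l → ℝ := ∫ b, V b ∂μ with hmV
  set y : Ω → Fin n → ℝ := fun a => X a - mX with hy
  set w : Ω → Fin l → ℝ := fun a => V a - mV with hwdef
  set ξ : Ω → Fin n → ℝ := fun a => Cm *ᵥ X a + Ctm *ᵥ mX + Dm *ᵥ V a + Dtm *ᵥ mV with hξ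
  set ζ : Ω → Fin n → ℝ := fun a => Am *ᵥ y a + Bm *ᵥ w a with hζ
  set θ : Ω → Fin n → ℝ := fun a => Cm *ᵥ y a + Dm *ᵥ w a with hθ
  set c : Fin n → ℝ := (Cm + Ctm) *ᵥ mX + (Dm + Dtm) *ᵥ mV with hc
  set mP : Fin n → ℝ := (Am + Atm) *ᵥ mX + (Bm + Btm) *ᵥ mV with hmP
  have ey : ∀ a, X a - mX = y a := fun a => rfl
  have ew : ∀ a, V a - mV = w a := fun a => rfl
  have eξ : ∀ a, Cm *ᵥ X a + Ctm *ᵥ mX + Dm *ᵥ V a + Dtm *ᵥ mV = ξ a := fun a => rfl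
  have eζ : ∀ a, Am *ᵥ y a + Bm *ᵥ w a = ζ a := fun a => rfl
  have eθ : ∀ a, Cm *ᵥ y a + Dm *ᵥ w a = θ a := fun a => rfl
  -- L² facts
  have hy2 : MemLp y 2 μ := hX2.sub (memLp_const mX)
  have hw2 : MemLp w 2 μ := hV2.sub (memLp_const mV)
  have hξ2 : MemLp ξ 2 μ :=
    ml2_add (ml2_add (ml2_add (ml2_mulVec Cm hX2) (memLp_const _)) (ml2_mulVec Dm hV2))
      (memLp_const _)
  have hζ2 : MemLp ζ 2 μ := ml2_add (ml2_mulVec Am hy2) (ml2_mulVec Bm hw2)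
  have hθ2 : MemLp θ 2 μ := ml2_add (ml2_mulVec Cm hy2) (ml2_mulVec Dm hw2)
  -- zero means
  have hmy : ∫ a, y a ∂μ = 0 := by
    simp only [hy]
    rw [integral_sub (ml2_int hX2) (integrable_const mX), integral_const]
    simp [hmX]
  have hmw : ∫ a, w a ∂μ = 0 := by
    simp only [hwdef]
    rw [integral_sub (ml2_int hV2) (integrable_const mV), integral_const]
    simp [hmV]
  have hmθ : ∫ a, θ a ∂μ = 0 := by
    simp only [hθ]
    rw [integral_add (ml2_int (ml2_mulVec Cm hy2)) (ml2_int (ml2_mulVec Dm hw2)),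
      integral_mulVec Cm (ml2_int hy2), integral_mulVec Dm (ml2_int hw2), hmy, hmw]
    simp
  -- independence facts
  have hIξ : IndepFun ξ ω μ := by
    refine indep_comp_pair hind
      (fun p => Cm *ᵥ p.1 + Ctm *ᵥ mX + Dm *ᵥ p.2 + Dtm *ᵥ mV) ?_
    exact ((((continuous_const.matrix_mulVec continuous_fst).add continuous_const).add
      (continuous_const.matrix_mulVec continuous_snd)).add continuous_const).measurable
  have contξ : Continuous (fun p : (Fin n → ℝ) × (Fin l → ℝ) =>
      Cm *ᵥ p.1 + Ctm *ᵥ mX + Dm *ᵥ p.2 + Dtm *ᵥ mV) :=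
    (((continuous_const.matrix_mulVec continuous_fst).add continuous_const).add
      (continuous_const.matrix_mulVec continuous_snd)).add continuous_const
  have contζ : Continuous (fun p : (Fin n → ℝ) × (Fin l → ℝ) =>
      Am *ᵥ (p.1 - mX) + Bm *ᵥ (p.2 - mV)) :=
    (continuous_const.matrix_mulVec (continuous_fst.sub continuous_const)).add
      (continuous_const.matrix_mulVec (continuous_snd.sub continuous_const))
  have hIζPξ : IndepFun (fun a => ζ a ⬝ᵥ (P' *ᵥ ξ a)) ω μ := by
    refine indep_comp_pair hind
      (fun p => (Am *ᵥ (p.1 - mX) + Bm *ᵥ (p.2 - mV)) ⬝ᵥ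
        (P' *ᵥ (Cm *ᵥ p.1 + Ctm *ᵥ mX + Dm *ᵥ p.2 + Dtm *ᵥ mV))) ?_
    exact (contζ.dotProduct (continuous_const.matrix_mulVec contξ)).measurable
  have hIξPζ : IndepFun (fun a => ξ a ⬝ᵥ (P' *ᵥ ζ a)) ω μ := by
    refine indep_comp_pair hind
      (fun p => (Cm *ᵥ p.1 + Ctm *ᵥ mX + Dm *ᵥ p.2 + Dtm *ᵥ mV) ⬝ᵥ
        (P' *ᵥ (Am *ᵥ (p.1 - mX) + Bm *ᵥ (p.2 - mV)))) ?_
    exact (contξ.dotProduct (continuous_const.matrix_mulVec contζ)).measurable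
  have hIξPξ : IndepFun (fun a => ξ a ⬝ᵥ (P' *ᵥ ξ a)) ω μ := by
    refine indep_comp_pair hind
      (fun p => (Cm *ᵥ p.1 + Ctm *ᵥ mX + Dm *ᵥ p.2 + Dtm *ᵥ mV) ⬝ᵥ
        (P' *ᵥ (Cm *ᵥ p.1 + Ctm *ᵥ mX + Dm *ᵥ p.2 + Dtm *ᵥ mV))) ?_
    exact (contξ.dotProduct (continuous_const.matrix_mulVec contξ)).measurable
  have hωξ2 : MemLp (fun a => ω a • ξ a) 2 μ := ml2_smul_indep hω2 hξ2 hIξ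
  -- mean of XP
  have hmXP : ∫ b, XP b ∂μ = mP := by
    simp only [hXP]
    have i1 : Integrable (fun b => Am *ᵥ X b + Atm *ᵥ mX + Bm *ᵥ V b + Btm *ᵥ mV) μ :=
      ml2_int (ml2_add (ml2_add (ml2_add (ml2_mulVec Am hX2) (memLp_const _))
        (ml2_mulVec Bm hV2)) (memLp_const _))
    have i2 : Integrable
        (fun b => ω b • (Cm *ᵥ X b + Ctm *ᵥ mX + Dm *ᵥ V b + Dtm *ᵥ mV)) μ :=
      ml2_int hωξ2
    rw [integral_add (f := fun b => Am *ᵥ X b + Atm *ᵥ mX + Bm *ᵥ V b + Btm *ᵥ mV)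
      (g := fun b => ω b • (Cm *ᵥ X b + Ctm *ᵥ mX + Dm *ᵥ V b + Dtm *ᵥ mV)) i1 i2]
    have hz : ∫ b, ω b • (Cm *ᵥ X b + Ctm *ᵥ mX + Dm *ᵥ V b + Dtm *ᵥ mV) ∂μ = 0 :=
      integral_smul_indep_zero hω2 hξ2 hIξ hωmean
    rw [hz, add_zero]
    have i3 : Integrable (fun b => Am *ᵥ X b + Atm *ᵥ mX + Bm *ᵥ V b) μ :=
      ml2_int (ml2_add (ml2_add (ml2_mulVec Am hX2) (memLp_const _)) (ml2_mulVec Bm hV2))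
    have i4 : Integrable (fun b => Am *ᵥ X b + Atm *ᵥ mX) μ :=
      ml2_int (ml2_add (ml2_mulVec Am hX2) (memLp_const _))
    rw [integral_add (f := fun b => Am *ᵥ X b + Atm *ᵥ mX + Bm *ᵥ V b)
        (g := fun _ => Btm *ᵥ mV) i3 (integrable_const _),
      integral_add (f := fun b => Am *ᵥ X b + Atm *ᵥ mX) (g := fun b => Bm *ᵥ V b) i4
        (ml2_int (ml2_mulVec Bm hV2)),
      integral_add (f := fun b => Am *ᵥ X b) (g := fun _ => Atm *ᵥ mX)
        (ml2_int (ml2_mulVec Am hX2)) (integrable_const _),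
      integral_mulVec Am (ml2_int hX2), integral_mulVec Bm (ml2_int hV2), integral_const,
      integral_const]
    simp only [measure_univ, ENNReal.toReal_one, probReal_univ, one_smul, ← hmX, ← hmV, hmP]
    rw [Matrix.add_mulVec, Matrix.add_mulVec]
    abel
  -- decomposition of the centered next state
  have hdec : ∀ a, XP a - mP = ζ a + ω a • ξ a := by
    intro a
    simp only [hXP, hmP, ← eξ, ← eζ, ← ey, ← ew]
    rw [Matrix.add_mulVec, Matrix.add_mulVec, Matrix.mulVec_sub, Matrix.mulVec_sub]
    abel
  -- expectation splits
  have hq1 : ∫ a, (ζ a + ω a • ξ a) ⬝ᵥ (P' *ᵥ (ζ a + ω a • ξ a)) ∂μ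
      = (∫ a, ζ a ⬝ᵥ (P' *ᵥ ζ a) ∂μ) + ∫ a, ξ a ⬝ᵥ (P' *ᵥ ξ a) ∂μ := by
    have hexp : ∀ a, (ζ a + ω a • ξ a) ⬝ᵥ (P' *ᵥ (ζ a + ω a • ξ a))
        = ζ a ⬝ᵥ (P' *ᵥ ζ a) + (ω a * (ζ a ⬝ᵥ (P' *ᵥ ξ a))
          + (ω a * (ξ a ⬝ᵥ (P' *ᵥ ζ a)) + (ω a * ω a) * (ξ a ⬝ᵥ (P' *ᵥ ξ a)))) := by
      intro a
      rw [Matrix.mulVec_add, add_dotProduct, dotProduct_add, dotProduct_add,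
        Matrix.mulVec_smul, dotProduct_smul, smul_dotProduct, dotProduct_smul,
        smul_dotProduct]
      simp only [smul_eq_mul]
      ring
    simp only [hexp]
    have iA : Integrable (fun a => ζ a ⬝ᵥ (P' *ᵥ ζ a)) μ :=
      integrable_dot hζ2 (ml2_mulVec P' hζ2)
    have iB : Integrable (fun a => ω a * (ζ a ⬝ᵥ (P' *ᵥ ξ a))) μ :=
      integrable_mul_indep hIζPξ (integrable_dot hζ2 (ml2_mulVec P' hξ2)) (ml2_int_s hω2)
    have iC : Integrable (fun a => ω a * (ξ a ⬝ᵥ (P' *ᵥ ζ a))) μ :=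
      integrable_mul_indep hIξPζ (integrable_dot hξ2 (ml2_mulVec P' hζ2)) (ml2_int_s hω2)
    have iD : Integrable (fun a => (ω a * ω a) * (ξ a ⬝ᵥ (P' *ᵥ ξ a))) μ :=
      integrable_mul_indep (hIξPξ.comp measurable_id (measurable_id.mul measurable_id))
        (integrable_dot hξ2 (ml2_mulVec P' hξ2)) (L2mul hω2 hω2)
    rw [integral_add (f := fun a => ζ a ⬝ᵥ (P' *ᵥ ζ a))
        (g := fun a => ω a * (ζ a ⬝ᵥ (P' *ᵥ ξ a))
          + (ω a * (ξ a ⬝ᵥ (P' *ᵥ ζ a)) + (ω a * ω a) * (ξ a ⬝ᵥ (P' *ᵥ ξ a)))) iA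
        (iB.add (iC.add iD)),
      integral_add (f := fun a => ω a * (ζ a ⬝ᵥ (P' *ᵥ ξ a)))
        (g := fun a => ω a * (ξ a ⬝ᵥ (P' *ᵥ ζ a)) + (ω a * ω a) * (ξ a ⬝ᵥ (P' *ᵥ ξ a)))
        iB (iC.add iD),
      integral_add (f := fun a => ω a * (ξ a ⬝ᵥ (P' *ᵥ ζ a)))
        (g := fun a => (ω a * ω a) * (ξ a ⬝ᵥ (P' *ᵥ ξ a))) iC iD]
    rw [indep_integral_mul_zero hIζPξ (integrable_dot hζ2 (ml2_mulVec P' hξ2))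
        (ml2_int_s hω2) hωmean,
      indep_integral_mul_zero hIξPζ (integrable_dot hξ2 (ml2_mulVec P' hζ2))
        (ml2_int_s hω2) hωmean,
      indep_integral_sq_mul hIξPξ (integrable_dot hξ2 (ml2_mulVec P' hξ2)) hω2 hωvar]
    ring
  have hq2 : ∫ a, ξ a ⬝ᵥ (P' *ᵥ ξ a) ∂μ
      = (∫ a, θ a ⬝ᵥ (P' *ᵥ θ a) ∂μ) + c ⬝ᵥ (P' *ᵥ c) := by
    have hξθ : ∀ a, ξ a = θ a + c := by
      intro a
      simp only [← eξ, ← eθ, ← ey, ← ew, hc]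
      rw [Matrix.mulVec_sub, Matrix.mulVec_sub, Matrix.add_mulVec, Matrix.add_mulVec]
      abel
    simp only [hξθ]
    exact integral_quad_split hθ2 hmθ P' c
  have hq3 : ∫ a, (Φm *ᵥ X a) ⬝ᵥ (Φm *ᵥ X a) ∂μ
      = (∫ a, y a ⬝ᵥ ((Φmᵀ * Φm) *ᵥ y a) ∂μ) + mX ⬝ᵥ ((Φmᵀ * Φm) *ᵥ mX) := by
    have h1 : ∀ a, (Φm *ᵥ X a) ⬝ᵥ (Φm *ᵥ X a)
        = (y a + mX) ⬝ᵥ ((Φmᵀ * Φm) *ᵥ (y a + mX)) := by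
      intro a
      rw [show X a = y a + mX from by rw [← ey a, sub_add_cancel], dot_mul_mulVec]
    simp only [h1]
    exact integral_quad_split hy2 hmy _ mX
  have hq4 : ∫ a, V a ⬝ᵥ V a ∂μ = (∫ a, w a ⬝ᵥ w a ∂μ) + mV ⬝ᵥ mV := by
    have h1 : ∀ a, V a ⬝ᵥ V a
        = (w a + mV) ⬝ᵥ ((1 : Matrix (Fin l) (Fin l) ℝ) *ᵥ (w a + mV)) := by
      intro a
      rw [show V a = w a + mV from by rw [← ew a, sub_add_cancel], Matrix.one_mulVec]
    simp only [h1]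
    rw [integral_quad_split hw2 hmw 1 mV, Matrix.one_mulVec]
    congr 1
    refine integral_congr_ae (Filter.Eventually.of_forall (fun a => ?_))
    simp [Matrix.one_mulVec]
  -- pointwise completion of squares (random part)
  have hkey : ∀ a, γ' ^ 2 * (w a ⬝ᵥ w a) - y a ⬝ᵥ ((Φmᵀ * Φm) *ᵥ y a) - y a ⬝ᵥ (P₀ *ᵥ y a)
      + ζ a ⬝ᵥ (P' *ᵥ ζ a) + θ a ⬝ᵥ (P' *ᵥ θ a)
      = (w a + (mfH γ' Bm Dm P' P')⁻¹ *ᵥ ((mfG Am Cm Bm Dm P' P')ᵀ *ᵥ y a)) ⬝ᵥ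
          ((mfH γ' Bm Dm P' P') *ᵥ (w a + (mfH γ' Bm Dm P' P')⁻¹ *ᵥ
            ((mfG Am Cm Bm Dm P' P')ᵀ *ᵥ y a))) := by
    intro a
    have h := key_identity γ' Am Cm Bm Dm Φm hP' hP' hHpos hP₀ (y a) (w a)
    rw [dot_mul_mulVec Φm Φm, eζ, eθ] at h
    exact h
  have iw : Integrable (fun a => w a ⬝ᵥ w a) μ := integrable_dot hw2 hw2
  have iyR : Integrable (fun a => y a ⬝ᵥ ((Φmᵀ * Φm) *ᵥ y a)) μ :=
    integrable_dot hy2 (ml2_mulVec _ hy2)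
  have iyP : Integrable (fun a => y a ⬝ᵥ (P₀ *ᵥ y a)) μ :=
    integrable_dot hy2 (ml2_mulVec _ hy2)
  have iζζ : Integrable (fun a => ζ a ⬝ᵥ (P' *ᵥ ζ a)) μ :=
    integrable_dot hζ2 (ml2_mulVec _ hζ2)
  have iθθ : Integrable (fun a => θ a ⬝ᵥ (P' *ᵥ θ a)) μ :=
    integrable_dot hθ2 (ml2_mulVec _ hθ2)
  have hrand : 0 ≤ γ' ^ 2 * (∫ a, w a ⬝ᵥ w a ∂μ) - (∫ a, y a ⬝ᵥ ((Φmᵀ * Φm) *ᵥ y a) ∂μ)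
      - (∫ a, y a ⬝ᵥ (P₀ *ᵥ y a) ∂μ) + (∫ a, ζ a ⬝ᵥ (P' *ᵥ ζ a) ∂μ)
      + ∫ a, θ a ⬝ᵥ (P' *ᵥ θ a) ∂μ := by
    have h0 : 0 ≤ ∫ a, (γ' ^ 2 * (w a ⬝ᵥ w a) - y a ⬝ᵥ ((Φmᵀ * Φm) *ᵥ y a)
        - y a ⬝ᵥ (P₀ *ᵥ y a) + ζ a ⬝ᵥ (P' *ᵥ ζ a) + θ a ⬝ᵥ (P' *ᵥ θ a)) ∂μ := by
      refine integral_nonneg (fun a => ?_)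
      rw [hkey a]
      exact psd_apply hHpos.posSemidef _
    rw [integral_add (f := fun a => γ' ^ 2 * (w a ⬝ᵥ w a) - y a ⬝ᵥ ((Φmᵀ * Φm) *ᵥ y a)
          - y a ⬝ᵥ (P₀ *ᵥ y a) + ζ a ⬝ᵥ (P' *ᵥ ζ a)) (g := fun a => θ a ⬝ᵥ (P' *ᵥ θ a))
        ((((iw.const_mul _).sub iyR).sub iyP).add iζζ) iθθ,
      integral_add (f := fun a => γ' ^ 2 * (w a ⬝ᵥ w a) - y a ⬝ᵥ ((Φmᵀ * Φm) *ᵥ y a)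
          - y a ⬝ᵥ (P₀ *ᵥ y a)) (g := fun a => ζ a ⬝ᵥ (P' *ᵥ ζ a))
        (((iw.const_mul _).sub iyR).sub iyP) iζζ,
      integral_sub (f := fun a => γ' ^ 2 * (w a ⬝ᵥ w a) - y a ⬝ᵥ ((Φmᵀ * Φm) *ᵥ y a))
        (g := fun a => y a ⬝ᵥ (P₀ *ᵥ y a)) ((iw.const_mul _).sub iyR) iyP,
      integral_sub (f := fun a => γ' ^ 2 * (w a ⬝ᵥ w a))
        (g := fun a => y a ⬝ᵥ ((Φmᵀ * Φm) *ᵥ y a)) (iw.const_mul _) iyR,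
      integral_const_mul] at h0
    exact h0
  -- mean part
  have hmean : 0 ≤ γ' ^ 2 * (mV ⬝ᵥ mV) - mX ⬝ᵥ ((Φmᵀ * Φm) *ᵥ mX) - mX ⬝ᵥ (Q₀ *ᵥ mX)
      + mP ⬝ᵥ (Q' *ᵥ mP) + c ⬝ᵥ (P' *ᵥ c) := by
    have h := key_identity γ' (Am + Atm) (Cm + Ctm) (Bm + Btm) (Dm + Dtm) Φm hQ' hP'
      hHtpos hQ₀ mX mV
    rw [dot_mul_mulVec Φm Φm, ← hmP, ← hc] at h
    rw [h]
    exact psd_apply hHtpos.posSemidef _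
  -- final assembly
  rw [hmXP]
  simp only [hdec]
  rw [hq1, hq2, hq3, hq4]
  simp only [ey]
  rw [mul_add]
  linarith [hrand, hmean]

end OneStep

section Main

set_option linter.unusedSectionVars false
set_option maxHeartbeats 1000000

variable {Ω : Type*} [MeasurableSpace Ω] {μ : Measure Ω} [IsProbabilityMeasure μ]

lemma mf_main (K n l m : ℕ) (γ' : ℝ)
    (A At C Ct : ℕ → Matrix (Fin n) (Fin n) ℝ)
    (B Bt D Dt : ℕ → Matrix (Fin n) (Fin l) ℝ)
    (Φ : ℕ → Matrix (Fin m) (Fin n) ℝ)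
    (W : ℕ → Ω → ℝ)
    (hW2 : ∀ k ≤ K, MemLp (W k) 2 μ)
    (hWmean : ∀ k ≤ K, ∫ a, W k a ∂μ = 0)
    (hWvar : ∀ k ≤ K, ∫ a, W k a * W k a ∂μ = 1)
    (P Q : ℕ → Matrix (Fin n) (Fin n) ℝ)
    (hPsym : ∀ k, (P k)ᵀ = P k) (hQsym : ∀ k, (Q k)ᵀ = Q k)
    (hPeq : ∀ k ≤ K, P k = mfL (A k) (C k) (Φ k) (P (k+1)) (P (k+1))
      - mfG (A k) (C k) (B k) (D k) (P (k+1)) (P (k+1))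
        * (mfH γ' (B k) (D k) (P (k+1)) (P (k+1)))⁻¹
        * (mfG (A k) (C k) (B k) (D k) (P (k+1)) (P (k+1)))ᵀ)
    (hQeq : ∀ k ≤ K, Q k = mfL (A k + At k) (C k + Ct k) (Φ k) (Q (k+1)) (P (k+1))
      - mfG (A k + At k) (C k + Ct k) (B k + Bt k) (D k + Dt k) (Q (k+1)) (P (k+1))
        * (mfH γ' (B k + Bt k) (D k + Dt k) (Q (k+1)) (P (k+1)))⁻¹
        * (mfG (A k + At k) (C k + Ct k) (B k + Bt k) (D k + Dt k) (Q (k+1)) (P (k+1)))ᵀ)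
    (hPK : P (K+1) = 0) (hQK : Q (K+1) = 0)
    (hposH : ∀ k ≤ K, (mfH γ' (B k) (D k) (P (k+1)) (P (k+1))).PosDef)
    (hposHt : ∀ k ≤ K, (mfH γ' (B k + Bt k) (D k + Dt k) (Q (k+1)) (P (k+1))).PosDef)
    (x : ℕ → Ω → Fin n → ℝ) (ν : ℕ → Ω → Fin l → ℝ)
    (hx0 : x 0 = fun _ => 0)
    (hxrec : ∀ k, x (k+1) = fun a => A k *ᵥ x k a + At k *ᵥ (∫ b, x k b ∂μ) + B k *ᵥ ν k a
      + Bt k *ᵥ (∫ b, ν k b ∂μ) + W k a • (C k *ᵥ x k a + Ct k *ᵥ (∫ b, x k b ∂μ)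
        + D k *ᵥ ν k a + Dt k *ᵥ (∫ b, ν k b ∂μ)))
    (hν2 : ∀ k ≤ K, MemLp (ν k) 2 μ)
    (hindp : ∀ k ≤ K, IndepFun (fun a => (x k a, ν k a)) (W k) μ) :
    ∑ k ∈ Finset.range (K+1), ∫ a, (Φ k *ᵥ x k a) ⬝ᵥ (Φ k *ᵥ x k a) ∂μ
      ≤ γ'^2 * ∑ k ∈ Finset.range (K+1), ∫ a, ν k a ⬝ᵥ ν k a ∂μ := by
  have hx2 : ∀ k, k ≤ K + 1 → MemLp (x k) 2 μ := by
    intro k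
    induction k with
    | zero => intro _; rw [hx0]; exact memLp_const _
    | succ k ih =>
      intro hk
      have hk' : k ≤ K := Nat.succ_le_succ_iff.mp hk
      have hxk : MemLp (x k) 2 μ := ih (Nat.le_succ_of_le hk')
      have hνk : MemLp (ν k) 2 μ := hν2 k hk'
      have hξ2 : MemLp (fun a => C k *ᵥ x k a + Ct k *ᵥ (∫ b, x k b ∂μ) + D k *ᵥ ν k a
          + Dt k *ᵥ (∫ b, ν k b ∂μ)) 2 μ :=
        ml2_add (ml2_add (ml2_add (ml2_mulVec _ hxk) (memLp_const _))
          (ml2_mulVec _ hνk)) (memLp_const _)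
      have hIξ : IndepFun (fun a => C k *ᵥ x k a + Ct k *ᵥ (∫ b, x k b ∂μ) + D k *ᵥ ν k a
          + Dt k *ᵥ (∫ b, ν k b ∂μ)) (W k) μ := by
        refine indep_comp_pair (hindp k hk')
          (fun p => C k *ᵥ p.1 + Ct k *ᵥ (∫ b, x k b ∂μ) + D k *ᵥ p.2
            + Dt k *ᵥ (∫ b, ν k b ∂μ)) ?_
        exact ((((continuous_const.matrix_mulVec continuous_fst).add continuous_const).add
          (continuous_const.matrix_mulVec continuous_snd)).add continuous_const).measurable
      rw [hxrec k]
      exact ml2_add (ml2_add (ml2_add (ml2_add (ml2_mulVec _ hxk) (memLp_const _))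
        (ml2_mulVec _ hνk)) (memLp_const _)) (ml2_smul_indep (hW2 k hk') hξ2 hIξ)
  set S : ℕ → ℝ := fun j =>
    (∫ a, (x j a - ∫ b, x j b ∂μ) ⬝ᵥ (P j *ᵥ (x j a - ∫ b, x j b ∂μ)) ∂μ)
      + (∫ b, x j b ∂μ) ⬝ᵥ (Q j *ᵥ (∫ b, x j b ∂μ)) with hS
  have hS0 : S 0 = 0 := by
    simp only [hS, hx0]
    simp
  have hSK : S (K+1) = 0 := by
    simp only [hS, hPK, hQK]
    simp
  have hstep : ∀ k, k ≤ K → 0 ≤ γ'^2 * (∫ a, ν k a ⬝ᵥ ν k a ∂μ)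
      - (∫ a, (Φ k *ᵥ x k a) ⬝ᵥ (Φ k *ᵥ x k a) ∂μ) + S (k+1) - S k := by
    intro k hk
    have h := one_step γ' (A k) (At k) (C k) (Ct k) (B k) (Bt k) (D k) (Dt k) (Φ k)
      (P (k+1)) (Q (k+1)) (P k) (Q k) (hPsym _) (hQsym _) (hposH k hk) (hposHt k hk)
      (hPeq k hk) (hQeq k hk) (x k) (x (k+1)) (ν k) (W k)
      (hx2 k (le_trans hk (Nat.le_succ K))) (hν2 k hk) (hW2 k hk) (hindp k hk)
      (hWmean k hk) (hWvar k hk) (hxrec k)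
    simp only [hS]
    linarith [h]
  have hsum : 0 ≤ ∑ k ∈ Finset.range (K+1), (γ'^2 * (∫ a, ν k a ⬝ᵥ ν k a ∂μ)
      - (∫ a, (Φ k *ᵥ x k a) ⬝ᵥ (Φ k *ᵥ x k a) ∂μ) + S (k+1) - S k) :=
    Finset.sum_nonneg (fun k hk => hstep k (Nat.lt_succ_iff.mp (Finset.mem_range.mp hk)))
  have hsplit : ∑ k ∈ Finset.range (K+1), (γ'^2 * (∫ a, ν k a ⬝ᵥ ν k a ∂μ)
      - (∫ a, (Φ k *ᵥ x k a) ⬝ᵥ (Φ k *ᵥ x k a) ∂μ) + S (k+1) - S k)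
      = γ'^2 * (∑ k ∈ Finset.range (K+1), ∫ a, ν k a ⬝ᵥ ν k a ∂μ)
        - (∑ k ∈ Finset.range (K+1), ∫ a, (Φ k *ᵥ x k a) ⬝ᵥ (Φ k *ᵥ x k a) ∂μ)
        + (S (K+1) - S 0) := by
    have e1 : ∀ k, γ'^2 * (∫ a, ν k a ⬝ᵥ ν k a ∂μ)
        - (∫ a, (Φ k *ᵥ x k a) ⬝ᵥ (Φ k *ᵥ x k a) ∂μ) + S (k+1) - S k
        = (γ'^2 * (∫ a, ν k a ⬝ᵥ ν k a ∂μ)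
          - (∫ a, (Φ k *ᵥ x k a) ⬝ᵥ (Φ k *ᵥ x k a) ∂μ)) + (S (k+1) - S k) := by
      intro k; ring
    rw [Finset.sum_congr rfl (fun k _ => e1 k), Finset.sum_add_distrib,
      Finset.sum_range_sub S, Finset.sum_sub_distrib, ← Finset.mul_sum]
  rw [hsplit, hS0, hSK] at hsum
  linarith
end Main

section Ric

set_option maxHeartbeats 1000000

noncomputable def ricSeq {n l m : ℕ} (K : ℕ)
    (A At C Ct : ℕ → Matrix (Fin n) (Fin n) ℝ)
    (B Bt D Dt : ℕ → Matrix (Fin n) (Fin l) ℝ)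
    (Φ : ℕ → Matrix (Fin m) (Fin n) ℝ) (g : ℝ) :
    ℕ → Matrix (Fin n) (Fin n) ℝ × Matrix (Fin n) (Fin n) ℝ
  | 0 => (0, 0)
  | (j+1) =>
    let prev := ricSeq K A At C Ct B Bt D Dt Φ g j
    (mfL (A (K-j)) (C (K-j)) (Φ (K-j)) prev.1 prev.1
       - mfG (A (K-j)) (C (K-j)) (B (K-j)) (D (K-j)) prev.1 prev.1
         * (mfH g (B (K-j)) (D (K-j)) prev.1 prev.1)⁻¹
         * (mfG (A (K-j)) (C (K-j)) (B (K-j)) (D (K-j)) prev.1 prev.1)ᵀ,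
     mfL (A (K-j) + At (K-j)) (C (K-j) + Ct (K-j)) (Φ (K-j)) prev.2 prev.1
       - mfG (A (K-j) + At (K-j)) (C (K-j) + Ct (K-j)) (B (K-j) + Bt (K-j))
           (D (K-j) + Dt (K-j)) prev.2 prev.1
         * (mfH g (B (K-j) + Bt (K-j)) (D (K-j) + Dt (K-j)) prev.2 prev.1)⁻¹
         * (mfG (A (K-j) + At (K-j)) (C (K-j) + Ct (K-j)) (B (K-j) + Bt (K-j))
             (D (K-j) + Dt (K-j)) prev.2 prev.1)ᵀ)

variable {n l m : ℕ} (K : ℕ)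
    (A At C Ct : ℕ → Matrix (Fin n) (Fin n) ℝ)
    (B Bt D Dt : ℕ → Matrix (Fin n) (Fin l) ℝ)
    (Φ : ℕ → Matrix (Fin m) (Fin n) ℝ)

lemma ricSeq_symm (g : ℝ) : ∀ j, ((ricSeq K A At C Ct B Bt D Dt Φ g j).1)ᵀ
      = (ricSeq K A At C Ct B Bt D Dt Φ g j).1
    ∧ ((ricSeq K A At C Ct B Bt D Dt Φ g j).2)ᵀ = (ricSeq K A At C Ct B Bt D Dt Φ g j).2 := by
  intro j
  induction j with
  | zero => simp [ricSeq]
  | succ j ih =>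
    simp only [ricSeq]
    exact ⟨ric_transpose g _ _ _ _ _ ih.1 ih.1, ric_transpose g _ _ _ _ _ ih.2 ih.1⟩

lemma ricSeq_eq (γ : ℝ) (P1 Q1 : ℕ → Matrix (Fin n) (Fin n) ℝ)
    (hP1eq : ∀ k ≤ K,
      P1 k = mfL (A k) (C k) (Φ k) (P1 (k+1)) (P1 (k+1))
        - mfG (A k) (C k) (B k) (D k) (P1 (k+1)) (P1 (k+1))
          * (mfH γ (B k) (D k) (P1 (k+1)) (P1 (k+1)))⁻¹
          * (mfG (A k) (C k) (B k) (D k) (P1 (k+1)) (P1 (k+1)))ᵀ)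
    (hQ1eq : ∀ k ≤ K,
      Q1 k = mfL (A k + At k) (C k + Ct k) (Φ k) (Q1 (k+1)) (P1 (k+1))
        - mfG (A k + At k) (C k + Ct k) (B k + Bt k) (D k + Dt k) (Q1 (k+1)) (P1 (k+1))
          * (mfH γ (B k + Bt k) (D k + Dt k) (Q1 (k+1)) (P1 (k+1)))⁻¹
          * (mfG (A k + At k) (C k + Ct k) (B k + Bt k) (D k + Dt k)
              (Q1 (k+1)) (P1 (k+1)))ᵀ)
    (hterm : P1 (K+1) = 0 ∧ Q1 (K+1) = 0) :
    ∀ j, j ≤ K+1 → ricSeq K A At C Ct B Bt D Dt Φ γ j = (P1 (K+1-j), Q1 (K+1-j)) := by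
  intro j
  induction j with
  | zero =>
    intro _
    simp [ricSeq, hterm.1, hterm.2]
  | succ j ih =>
    intro hj
    have hj' : j ≤ K := by omega
    have hKj : K + 1 - (j+1) = K - j := by omega
    have hKj2 : K + 1 - j = (K - j) + 1 := by omega
    have hkK : K - j ≤ K := by omega
    simp only [ricSeq]
    rw [ih (by omega), hKj, hKj2]
    refine Prod.ext ?_ ?_
    · exact (hP1eq (K-j) hkK).symm
    · exact (hQ1eq (K-j) hkK).symm

lemma contAt_ring_inverse_real {x : ℝ} (hx : x ≠ 0) :
    ContinuousAt (Ring.inverse : ℝ → ℝ) x := by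
  rw [Ring.inverse_eq_inv']
  exact continuousAt_inv₀ hx

lemma contAt_matmul {a b c : ℕ} {γ : ℝ} {f : ℝ → Matrix (Fin a) (Fin b) ℝ}
    {g : ℝ → Matrix (Fin b) (Fin c) ℝ} (hf : ContinuousAt f γ) (hg : ContinuousAt g γ) :
    ContinuousAt (fun t => f t * g t) γ := by
  have h : Continuous (fun p : Matrix (Fin a) (Fin b) ℝ × Matrix (Fin b) (Fin c) ℝ
      => p.1 * p.2) := continuous_fst.matrix_mul continuous_snd
  have hc : ContinuousAt ((fun p : Matrix (Fin a) (Fin b) ℝ × Matrix (Fin b) (Fin c) ℝ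
      => p.1 * p.2) ∘ (fun t => (f t, g t))) γ := ContinuousAt.comp h.continuousAt (hf.prodMk hg)
  exact hc

lemma contAt_mfH {p q : ℕ} (Bb Db : Matrix (Fin p) (Fin q) ℝ) {γ : ℝ}
    {f g : ℝ → Matrix (Fin p) (Fin p) ℝ} (hf : ContinuousAt f γ) (hg : ContinuousAt g γ) :
    ContinuousAt (fun t => mfH t Bb Db (f t) (g t)) γ := by
  simp only [mfH]
  refine ContinuousAt.add (ContinuousAt.add ?_ ?_) ?_
  · exact ContinuousAt.smul ((continuous_pow 2).continuousAt) continuousAt_const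
  · exact contAt_matmul (contAt_matmul continuousAt_const hf) continuousAt_const
  · exact contAt_matmul (contAt_matmul continuousAt_const hg) continuousAt_const

lemma contAt_ric_step {p q r : ℕ} (Ab Cb : Matrix (Fin p) (Fin p) ℝ)
    (Bb Db : Matrix (Fin p) (Fin q) ℝ) (Φb : Matrix (Fin r) (Fin p) ℝ) {γ : ℝ}
    {f g : ℝ → Matrix (Fin p) (Fin p) ℝ} (hf : ContinuousAt f γ) (hg : ContinuousAt g γ)
    (hdet : IsUnit (mfH γ Bb Db (f γ) (g γ)).det) :
    ContinuousAt (fun t => mfL Ab Cb Φb (f t) (g t)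
      - mfG Ab Cb Bb Db (f t) (g t) * (mfH t Bb Db (f t) (g t))⁻¹
        * (mfG Ab Cb Bb Db (f t) (g t))ᵀ) γ := by
  have hH : ContinuousAt (fun t => mfH t Bb Db (f t) (g t)) γ := contAt_mfH Bb Db hf hg
  have hHinv : ContinuousAt (fun t => (mfH t Bb Db (f t) (g t))⁻¹) γ := by
    have h1 : ContinuousAt Inv.inv (mfH γ Bb Db (f γ) (g γ)) :=
      continuousAt_matrix_inv _ (contAt_ring_inverse_real (by
        intro h0
        rw [h0] at hdet
        simp at hdet))
    have hc : ContinuousAt (Inv.inv ∘ (fun t => mfH t Bb Db (f t) (g t))) γ :=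
      ContinuousAt.comp h1 hH
    exact hc
  have hL : ContinuousAt (fun t => mfL Ab Cb Φb (f t) (g t)) γ := by
    simp only [mfL]
    exact ((contAt_matmul (contAt_matmul continuousAt_const hf) continuousAt_const).add
      (contAt_matmul (contAt_matmul continuousAt_const hg) continuousAt_const)).sub
      continuousAt_const
  have hG : ContinuousAt (fun t => mfG Ab Cb Bb Db (f t) (g t)) γ := by
    simp only [mfG]
    exact (contAt_matmul (contAt_matmul continuousAt_const hf) continuousAt_const).add
      (contAt_matmul (contAt_matmul continuousAt_const hg) continuousAt_const)
  have hGt : ContinuousAt (fun t => (mfG Ab Cb Bb Db (f t) (g t))ᵀ) γ := by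
    have hc : ContinuousAt ((fun M : Matrix (Fin p) (Fin q) ℝ => Mᵀ)
        ∘ (fun t => mfG Ab Cb Bb Db (f t) (g t))) γ :=
      ContinuousAt.comp (continuous_id.matrix_transpose).continuousAt hG
    exact hc
  exact hL.sub (contAt_matmul (contAt_matmul hG hHinv) hGt)

lemma ricSeq_contAt (γ : ℝ) :
    ∀ j, (∀ j' < j,
      IsUnit (mfH γ (B (K-j')) (D (K-j'))
        (ricSeq K A At C Ct B Bt D Dt Φ γ j').1
        (ricSeq K A At C Ct B Bt D Dt Φ γ j').1).det
      ∧ IsUnit (mfH γ (B (K-j') + Bt (K-j')) (D (K-j') + Dt (K-j'))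
        (ricSeq K A At C Ct B Bt D Dt Φ γ j').2
        (ricSeq K A At C Ct B Bt D Dt Φ γ j').1).det) →
    ContinuousAt (fun t => ricSeq K A At C Ct B Bt D Dt Φ t j) γ := by
  intro j
  induction j with
  | zero => intro _; exact continuousAt_const
  | succ j ih =>
    intro hdet
    have hprev : ContinuousAt (fun t => ricSeq K A At C Ct B Bt D Dt Φ t j) γ :=
      ih (fun j' hj' => hdet j' (Nat.lt_succ_of_lt hj'))
    have h1 : ContinuousAt (fun t => (ricSeq K A At C Ct B Bt D Dt Φ t j).1) γ :=
      (continuous_fst.continuousAt).comp hprev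
    have h2 : ContinuousAt (fun t => (ricSeq K A At C Ct B Bt D Dt Φ t j).2) γ :=
      (continuous_snd.continuousAt).comp hprev
    have hd := hdet j (Nat.lt_succ_self j)
    have c1 := contAt_ric_step (A (K-j)) (C (K-j)) (B (K-j)) (D (K-j)) (Φ (K-j))
      h1 h1 hd.1
    have c2 := contAt_ric_step (A (K-j) + At (K-j)) (C (K-j) + Ct (K-j))
      (B (K-j) + Bt (K-j)) (D (K-j) + Dt (K-j)) (Φ (K-j)) h2 h1 hd.2
    simp only [ricSeq]
    exact c1.prodMk c2

end Ric


set_option maxHeartbeats 1600000 in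
/-- Theorem 2.4, SBRL.  If the constrained backward difference
equation (2.6) has a solution `(P₁, Q₁)`, then the perturbed operator of the
mean-field system satisfies `‖L_K‖ < γ`, and `Q₁(k) ≤ 0` for all `k ∈ {0,…,K}`. -/
theorem mf_SBRL {Ω : Type*} [MeasurableSpace Ω] (μ : Measure Ω) [IsProbabilityMeasure μ]
    (K n l m : ℕ) (γ : ℝ) (hγ : 0 < γ)
    (A At C Ct : ℕ → Matrix (Fin n) (Fin n) ℝ)
    (B Bt D Dt : ℕ → Matrix (Fin n) (Fin l) ℝ)
    (Φ : ℕ → Matrix (Fin m) (Fin n) ℝ)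
    (W : ℕ → Ω → ℝ)
    (hW2 : ∀ k ≤ K, MemLp (W k) 2 μ)
    (hWmean : ∀ k ≤ K, ∫ a, W k a ∂μ = 0)
    (hWcov : ∀ s ≤ K, ∀ t ≤ K, ∫ a, W s a * W t a ∂μ = if s = t then (1:ℝ) else 0)
    (P1 Q1 : ℕ → Matrix (Fin n) (Fin n) ℝ)
    (hP1eq : ∀ k ≤ K,
      P1 k = mfL (A k) (C k) (Φ k) (P1 (k+1)) (P1 (k+1))
        - mfG (A k) (C k) (B k) (D k) (P1 (k+1)) (P1 (k+1))
          * (mfH γ (B k) (D k) (P1 (k+1)) (P1 (k+1)))⁻¹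
          * (mfG (A k) (C k) (B k) (D k) (P1 (k+1)) (P1 (k+1)))ᵀ)
    (hQ1eq : ∀ k ≤ K,
      Q1 k = mfL (A k + At k) (C k + Ct k) (Φ k) (Q1 (k+1)) (P1 (k+1))
        - mfG (A k + At k) (C k + Ct k) (B k + Bt k) (D k + Dt k) (Q1 (k+1)) (P1 (k+1))
          * (mfH γ (B k + Bt k) (D k + Dt k) (Q1 (k+1)) (P1 (k+1)))⁻¹
          * (mfG (A k + At k) (C k + Ct k) (B k + Bt k) (D k + Dt k)
              (Q1 (k+1)) (P1 (k+1)))ᵀ)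
    (hterm : P1 (K+1) = 0 ∧ Q1 (K+1) = 0)
    (hposH : ∀ k ≤ K, (mfH γ (B k) (D k) (P1 (k+1)) (P1 (k+1))).PosDef)
    (hposHt : ∀ k ≤ K,
      (mfH γ (B k + Bt k) (D k + Dt k) (Q1 (k+1)) (P1 (k+1))).PosDef) :
    sSup {r : ℝ | ∃ ν : ℕ → Ω → Fin l → ℝ,
        mfAdmissible μ K W (mfState μ A At C Ct B Bt D Dt W 0 ν) ν ∧
        0 < (∑ k ∈ Finset.range (K + 1), ∫ a, (ν k a) ⬝ᵥ (ν k a) ∂μ) ∧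
        r = Real.sqrt (∑ k ∈ Finset.range (K + 1), ∫ a,
              (Φ k *ᵥ mfState μ A At C Ct B Bt D Dt W 0 ν k a) ⬝ᵥ
                (Φ k *ᵥ mfState μ A At C Ct B Bt D Dt W 0 ν k a) ∂μ)
            / Real.sqrt (∑ k ∈ Finset.range (K + 1), ∫ a, (ν k a) ⬝ᵥ (ν k a) ∂μ)} < γ
    ∧ ∀ k ≤ K, (-(Q1 k)).PosSemidef := by
  have hWvar : ∀ k ≤ K, ∫ a, W k a * W k a ∂μ = 1 := by
    intro k hk
    have := hWcov k hk k hk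
    simpa using this
  -- negative semidefiniteness by backward induction
  have hPQpsd : ∀ d k, k + d = K + 1 → (-(P1 k)).PosSemidef ∧ (-(Q1 k)).PosSemidef := by
    intro d
    induction d with
    | zero =>
      intro k hk
      have hkK : k = K + 1 := by omega
      subst hkK
      rw [hterm.1, hterm.2, neg_zero]
      exact ⟨Matrix.PosSemidef.zero, Matrix.PosSemidef.zero⟩
    | succ d ih =>
      intro k hk
      have hk' : k ≤ K := by omega
      have h1 := ih (k+1) (by omega)
      constructor
      · rw [hP1eq k hk']
        exact negq_step γ (A k) (C k) (B k) (D k) (Φ k) h1.1 h1.1 (hposH k hk')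
      · rw [hQ1eq k hk']
        exact negq_step γ (A k + At k) (C k + Ct k) (B k + Bt k) (D k + Dt k) (Φ k)
          h1.2 h1.1 (hposHt k hk')
  have hmatch := ricSeq_eq K A At C Ct B Bt D Dt Φ γ P1 Q1 hP1eq hQ1eq hterm
  -- determinant facts at γ along the recursion
  have hdets : ∀ j' ≤ K,
      IsUnit (mfH γ (B (K-j')) (D (K-j'))
        (ricSeq K A At C Ct B Bt D Dt Φ γ j').1
        (ricSeq K A At C Ct B Bt D Dt Φ γ j').1).det
      ∧ IsUnit (mfH γ (B (K-j') + Bt (K-j')) (D (K-j') + Dt (K-j'))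
        (ricSeq K A At C Ct B Bt D Dt Φ γ j').2
        (ricSeq K A At C Ct B Bt D Dt Φ γ j').1).det := by
    intro j' hj'
    have e := hmatch j' (by omega)
    have e1 : K + 1 - j' = (K - j') + 1 := by omega
    rw [e, e1]
    exact ⟨(hposH (K - j') (by omega)).det_pos.ne'.isUnit,
      (hposHt (K - j') (by omega)).det_pos.ne'.isUnit⟩
  have hcont : ∀ j, j ≤ K + 1 →
      ContinuousAt (fun t => ricSeq K A At C Ct B Bt D Dt Φ t j) γ := by
    intro j hj
    exact ricSeq_contAt K A At C Ct B Bt D Dt Φ γ j (fun j' hj' => hdets j' (by omega))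
  -- eventual positive definiteness near γ
  have hev : ∀ k, k ≤ K → ∀ᶠ t in nhds γ,
      (mfH t (B k) (D k) (ricSeq K A At C Ct B Bt D Dt Φ t (K-k)).1
        (ricSeq K A At C Ct B Bt D Dt Φ t (K-k)).1).PosDef
      ∧ (mfH t (B k + Bt k) (D k + Dt k) (ricSeq K A At C Ct B Bt D Dt Φ t (K-k)).2
        (ricSeq K A At C Ct B Bt D Dt Φ t (K-k)).1).PosDef := by
    intro k hk
    have hc : ContinuousAt (fun t => ricSeq K A At C Ct B Bt D Dt Φ t (K-k)) γ :=
      hcont (K-k) (by omega)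
    have hc1 : ContinuousAt (fun t => (ricSeq K A At C Ct B Bt D Dt Φ t (K-k)).1) γ :=
      continuous_fst.continuousAt.comp hc
    have hc2 : ContinuousAt (fun t => (ricSeq K A At C Ct B Bt D Dt Φ t (K-k)).2) γ :=
      continuous_snd.continuousAt.comp hc
    have e2 : K + 1 - (K - k) = k + 1 := by omega
    have eγ : ricSeq K A At C Ct B Bt D Dt Φ γ (K-k) = (P1 (k+1), Q1 (k+1)) := by
      rw [hmatch (K-k) (by omega), e2]
    have h1 := posdef_eventually (F := fun t => mfH t (B k) (D k)
        (ricSeq K A At C Ct B Bt D Dt Φ t (K-k)).1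
        (ricSeq K A At C Ct B Bt D Dt Φ t (K-k)).1)
      (contAt_mfH _ _ hc1 hc1)
      (fun t => mfH_transpose t (B k) (D k)
        (ricSeq_symm K A At C Ct B Bt D Dt Φ t (K-k)).1
        (ricSeq_symm K A At C Ct B Bt D Dt Φ t (K-k)).1)
      (by
        show (mfH γ (B k) (D k) (ricSeq K A At C Ct B Bt D Dt Φ γ (K-k)).1
          (ricSeq K A At C Ct B Bt D Dt Φ γ (K-k)).1).PosDef
        rw [eγ]
        exact hposH k hk)
    have h2 := posdef_eventually (F := fun t => mfH t (B k + Bt k) (D k + Dt k)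
        (ricSeq K A At C Ct B Bt D Dt Φ t (K-k)).2
        (ricSeq K A At C Ct B Bt D Dt Φ t (K-k)).1)
      (contAt_mfH _ _ hc2 hc1)
      (fun t => mfH_transpose t (B k + Bt k) (D k + Dt k)
        (ricSeq_symm K A At C Ct B Bt D Dt Φ t (K-k)).2
        (ricSeq_symm K A At C Ct B Bt D Dt Φ t (K-k)).1)
      (by
        show (mfH γ (B k + Bt k) (D k + Dt k) (ricSeq K A At C Ct B Bt D Dt Φ γ (K-k)).2
          (ricSeq K A At C Ct B Bt D Dt Φ γ (K-k)).1).PosDef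
        rw [eγ]
        exact hposHt k hk)
    exact h1.and h2
  have hall : ∀ᶠ t in nhds γ, ∀ k ∈ Finset.range (K+1),
      (mfH t (B k) (D k) (ricSeq K A At C Ct B Bt D Dt Φ t (K-k)).1
        (ricSeq K A At C Ct B Bt D Dt Φ t (K-k)).1).PosDef
      ∧ (mfH t (B k + Bt k) (D k + Dt k) (ricSeq K A At C Ct B Bt D Dt Φ t (K-k)).2
        (ricSeq K A At C Ct B Bt D Dt Φ t (K-k)).1).PosDef := by
    rw [Filter.eventually_all_finset]
    intro k hk
    exact hev k (Nat.lt_succ_iff.mp (Finset.mem_range.mp hk))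
  have hall' := hall.filter_mono (nhdsWithin_le_nhds (s := Set.Iio γ))
  have hIoo : Set.Ioo 0 γ ∈ nhdsWithin γ (Set.Iio γ) :=
    Ioo_mem_nhdsLT_of_mem ⟨hγ, le_refl γ⟩
  obtain ⟨γ₀, hγ₀pd, hγ₀mem⟩ :=
    (hall'.and (Filter.eventually_of_mem hIoo (fun t ht => ht))).exists
  have hγ₀pos : 0 < γ₀ := hγ₀mem.1
  have hγ₀lt : γ₀ < γ := hγ₀mem.2
  -- the perturbed Riccati solution
  set Pg : ℕ → Matrix (Fin n) (Fin n) ℝ :=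
    fun k => (ricSeq K A At C Ct B Bt D Dt Φ γ₀ (K+1-k)).1 with hPg
  set Qg : ℕ → Matrix (Fin n) (Fin n) ℝ :=
    fun k => (ricSeq K A At C Ct B Bt D Dt Φ γ₀ (K+1-k)).2 with hQg
  have hPgsym : ∀ k, (Pg k)ᵀ = Pg k := fun k =>
    (ricSeq_symm K A At C Ct B Bt D Dt Φ γ₀ (K+1-k)).1
  have hQgsym : ∀ k, (Qg k)ᵀ = Qg k := fun k =>
    (ricSeq_symm K A At C Ct B Bt D Dt Φ γ₀ (K+1-k)).2
  have hPgK : Pg (K+1) = 0 := by simp [hPg, ricSeq]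
  have hQgK : Qg (K+1) = 0 := by simp [hQg, ricSeq]
  have hPgeq : ∀ k ≤ K, Pg k = mfL (A k) (C k) (Φ k) (Pg (k+1)) (Pg (k+1))
      - mfG (A k) (C k) (B k) (D k) (Pg (k+1)) (Pg (k+1))
        * (mfH γ₀ (B k) (D k) (Pg (k+1)) (Pg (k+1)))⁻¹
        * (mfG (A k) (C k) (B k) (D k) (Pg (k+1)) (Pg (k+1)))ᵀ := by
    intro k hk
    have e1 : K + 1 - k = (K - k) + 1 := by omega
    have e2 : K - (K - k) = k := by omega
    have e3 : K + 1 - (k+1) = K - k := by omega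
    simp only [hPg, e1, e3, ricSeq, e2]
  have hQgeq : ∀ k ≤ K, Qg k = mfL (A k + At k) (C k + Ct k) (Φ k) (Qg (k+1)) (Pg (k+1))
      - mfG (A k + At k) (C k + Ct k) (B k + Bt k) (D k + Dt k) (Qg (k+1)) (Pg (k+1))
        * (mfH γ₀ (B k + Bt k) (D k + Dt k) (Qg (k+1)) (Pg (k+1)))⁻¹
        * (mfG (A k + At k) (C k + Ct k) (B k + Bt k) (D k + Dt k) (Qg (k+1)) (Pg (k+1)))ᵀ := by
    intro k hk
    have e1 : K + 1 - k = (K - k) + 1 := by omega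
    have e2 : K - (K - k) = k := by omega
    have e3 : K + 1 - (k+1) = K - k := by omega
    simp only [hPg, hQg, e1, e3, ricSeq, e2]
  have hHg : ∀ k ≤ K, (mfH γ₀ (B k) (D k) (Pg (k+1)) (Pg (k+1))).PosDef := by
    intro k hk
    have e3 : K + 1 - (k+1) = K - k := by omega
    simp only [hPg, e3]
    exact (hγ₀pd k (Finset.mem_range.mpr (by omega))).1
  have hHtg : ∀ k ≤ K,
      (mfH γ₀ (B k + Bt k) (D k + Dt k) (Qg (k+1)) (Pg (k+1))).PosDef := by
    intro k hk
    have e3 : K + 1 - (k+1) = K - k := by omega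
    simp only [hPg, hQg, e3]
    exact (hγ₀pd k (Finset.mem_range.mpr (by omega))).2
  constructor
  · refine lt_of_le_of_lt (Real.sSup_le ?_ hγ₀pos.le) hγ₀lt
    rintro r ⟨ν, hadm, hpos, rfl⟩
    have hmain := mf_main K n l m γ₀ A At C Ct B Bt D Dt Φ W hW2 hWmean hWvar Pg Qg
      hPgsym hQgsym hPgeq hQgeq hPgK hQgK hHg hHtg
      (mfState μ A At C Ct B Bt D Dt W 0 ν) ν rfl (fun k => rfl) hadm.1 hadm.2
    have hden : 0 < Real.sqrt (∑ k ∈ Finset.range (K + 1), ∫ a, (ν k a) ⬝ᵥ (ν k a) ∂μ) :=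
      Real.sqrt_pos.2 hpos
    rw [div_le_iff₀ hden]
    calc Real.sqrt (∑ k ∈ Finset.range (K + 1), ∫ a,
          (Φ k *ᵥ mfState μ A At C Ct B Bt D Dt W 0 ν k a) ⬝ᵥ
            (Φ k *ᵥ mfState μ A At C Ct B Bt D Dt W 0 ν k a) ∂μ)
        ≤ Real.sqrt (γ₀^2 * ∑ k ∈ Finset.range (K + 1), ∫ a, (ν k a) ⬝ᵥ (ν k a) ∂μ) :=
          Real.sqrt_le_sqrt hmain
      _ = γ₀ * Real.sqrt (∑ k ∈ Finset.range (K + 1), ∫ a, (ν k a) ⬝ᵥ (ν k a) ∂μ) := by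
          rw [Real.sqrt_mul (sq_nonneg γ₀), Real.sqrt_sq hγ₀pos.le]
  · intro k hk
    exact (hPQpsd (K+1-k) k (by omega)).2
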